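/- arXiv:2111.02181 — 7 statements merged into one kernel-verified Lean document; each statement's English description precedes it below -/
import Mathlib

section
/- There exists exactly one family of formal power series f_N, g_N (N ≥ 0) and f_Q in ℝ[[z]] satisfying the two-step Knödel–Böhm–Hornik system together with the support condition. -/
open PowerSeries Filter

noncomputable section

namespace TwoStepAux

/-- One step of the coefficient recursion: given the coefficients of z^m of all series,
produce the coefficients of z^(m+1). -/
def step (α β : ℝ) (s : (ℕ → ℝ) × (ℕ → ℝ) × ℝ) : (ℕ → ℝ) × (ℕ → ℝ) × ℝ :=
  (fun N => match N with
    | 0 => α * β * s.1 1 + (α ^ 2 + β ^ 2) * s.1 0 + α * β * s.2.2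
    | 1 => α * β * s.1 0 + α * β * s.1 2 + (α ^ 2 + β ^ 2) * s.1 1 + β ^ 2 * s.2.2
    | (N + 2) => α * β * s.1 (N + 1) + α * β * s.1 (N + 3) + (α ^ 2 + β ^ 2) * s.1 (N + 2),
   fun N => match N with
    | 0 => α * β * s.1 0 + α * β * s.2.1 1 + α * β * s.2.2 + (α ^ 2 + β ^ 2) * s.2.1 0
    | (N + 1) => α * β * s.2.1 N + α * β * s.2.1 (N + 2) + (α ^ 2 + β ^ 2) * s.2.1 (N + 1),
   α * β * s.2.1 0 + α ^ 2 * s.2.2)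

/-- The coefficients of z^m of all series. -/
def S (α β : ℝ) : ℕ → (ℕ → ℝ) × (ℕ → ℝ) × ℝ
  | 0 => (fun N => if N = 0 then 1 else 0, fun _ => 0, 0)
  | (m + 1) => step α β (S α β m)

lemma coeff_CXmul (c : ℝ) (φ : PowerSeries ℝ) (m : ℕ) :
    coeff (m + 1) (C c * X * φ) = c * coeff m φ := by
  rw [mul_comm (C c) X, mul_assoc, coeff_succ_X_mul, coeff_C_mul]

lemma coeff_zero_CXmul (c : ℝ) (φ : PowerSeries ℝ) :
    coeff 0 (C c * X * φ) = 0 := by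
  simp [coeff_zero_eq_constantCoeff]

lemma coeff2 (c1 c2 : ℝ) (φ1 φ2 : PowerSeries ℝ) (m : ℕ) :
    coeff (m + 1) (C c1 * X * φ1 + C c2 * X * φ2)
      = c1 * coeff m φ1 + c2 * coeff m φ2 := by
  rw [map_add, coeff_CXmul, coeff_CXmul]

lemma coeff3 (c1 c2 c3 : ℝ) (φ1 φ2 φ3 : PowerSeries ℝ) (m : ℕ) :
    coeff (m + 1) (C c1 * X * φ1 + C c2 * X * φ2 + C c3 * X * φ3)
      = c1 * coeff m φ1 + c2 * coeff m φ2 + c3 * coeff m φ3 := by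
  rw [map_add, coeff2, coeff_CXmul]

lemma coeff4 (c1 c2 c3 c4 : ℝ) (φ1 φ2 φ3 φ4 : PowerSeries ℝ) (m : ℕ) :
    coeff (m + 1) (C c1 * X * φ1 + C c2 * X * φ2 + C c3 * X * φ3 + C c4 * X * φ4)
      = c1 * coeff m φ1 + c2 * coeff m φ2 + c3 * coeff m φ3 + c4 * coeff m φ4 := by
  rw [map_add, coeff3, coeff_CXmul]

lemma coeff1_3 (c1 c2 c3 : ℝ) (φ1 φ2 φ3 : PowerSeries ℝ) (m : ℕ) :
    coeff (m + 1) (1 + C c1 * X * φ1 + C c2 * X * φ2 + C c3 * X * φ3)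
      = c1 * coeff m φ1 + c2 * coeff m φ2 + c3 * coeff m φ3 := by
  rw [map_add, map_add, map_add, coeff_CXmul, coeff_CXmul, coeff_CXmul, coeff_one,
    if_neg (Nat.succ_ne_zero m), zero_add]

lemma zero2 (c1 c2 : ℝ) (φ1 φ2 : PowerSeries ℝ) :
    coeff 0 (C c1 * X * φ1 + C c2 * X * φ2) = 0 := by
  rw [map_add, coeff_zero_CXmul, coeff_zero_CXmul, add_zero]

lemma zero3 (c1 c2 c3 : ℝ) (φ1 φ2 φ3 : PowerSeries ℝ) :
    coeff 0 (C c1 * X * φ1 + C c2 * X * φ2 + C c3 * X * φ3) = 0 := by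
  rw [map_add, zero2, coeff_zero_CXmul, add_zero]

lemma zero4 (c1 c2 c3 c4 : ℝ) (φ1 φ2 φ3 φ4 : PowerSeries ℝ) :
    coeff 0 (C c1 * X * φ1 + C c2 * X * φ2 + C c3 * X * φ3 + C c4 * X * φ4)
      = 0 := by
  rw [map_add, zero3, coeff_zero_CXmul, add_zero]

lemma one3 (c1 c2 c3 : ℝ) (φ1 φ2 φ3 : PowerSeries ℝ) :
    coeff 0 (1 + C c1 * X * φ1 + C c2 * X * φ2 + C c3 * X * φ3) = 1 := by
  rw [map_add, map_add, map_add, coeff_zero_CXmul, coeff_zero_CXmul, coeff_zero_CXmul,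
    coeff_one, if_pos rfl]
  ring

/-- Support property of the recursion. -/
lemma S_support (α β : ℝ) : ∀ m N : ℕ, m < N →
    (S α β m).1 N = 0 ∧ (S α β m).2.1 N = 0 := by
  intro m
  induction m with
  | zero =>
      intro N hN
      have hN' : N ≠ 0 := by omega
      constructor
      · simp [S, hN']
      · simp [S]
  | succ m ih =>
      intro N hN
      constructor
      · obtain ⟨k, rfl⟩ : ∃ k, N = k + 2 := ⟨N - 2, by omega⟩
        have h1 := (ih (k + 1) (by omega)).1
        have h2 := (ih (k + 3) (by omega)).1
        have h3 := (ih (k + 2) (by omega)).1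
        show α * β * (S α β m).1 (k + 1) + α * β * (S α β m).1 (k + 3)
            + (α ^ 2 + β ^ 2) * (S α β m).1 (k + 2) = 0
        rw [h1, h2, h3]; ring
      · obtain ⟨k, rfl⟩ : ∃ k, N = k + 1 := ⟨N - 1, by omega⟩
        have h1 := (ih k (by omega)).2
        have h2 := (ih (k + 2) (by omega)).2
        have h3 := (ih (k + 1) (by omega)).2
        show α * β * (S α β m).2.1 k + α * β * (S α β m).2.1 (k + 2)
            + (α ^ 2 + β ^ 2) * (S α β m).2.1 (k + 1) = 0
        rw [h1, h2, h3]; ring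

/-- Any solution of the equations has coefficients given by `S`. -/
lemma forced (α β : ℝ) (p : (ℕ → PowerSeries ℝ) × (ℕ → PowerSeries ℝ) × PowerSeries ℝ)
    (h1 : ∀ N : ℕ, p.1 (N + 2) =
        C (α * β) * X * p.1 (N + 1) + C (α * β) * X * p.1 (N + 3)
          + C (α ^ 2 + β ^ 2) * X * p.1 (N + 2))
    (h2 : p.1 1 = C (α * β) * X * p.1 0 + C (α * β) * X * p.1 2
          + C (α ^ 2 + β ^ 2) * X * p.1 1 + C (β ^ 2) * X * p.2.2)
    (h3 : p.1 0 = 1 + C (α * β) * X * p.1 1 + C (α ^ 2 + β ^ 2) * X * p.1 0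
          + C (α * β) * X * p.2.2)
    (h4 : p.2.2 = C (α * β) * X * p.2.1 0 + C (α ^ 2) * X * p.2.2)
    (h5 : ∀ N : ℕ, p.2.1 (N + 1) = C (α * β) * X * p.2.1 N
          + C (α * β) * X * p.2.1 (N + 2) + C (α ^ 2 + β ^ 2) * X * p.2.1 (N + 1))
    (h6 : p.2.1 0 = C (α * β) * X * p.1 0 + C (α * β) * X * p.2.1 1
          + C (α * β) * X * p.2.2 + C (α ^ 2 + β ^ 2) * X * p.2.1 0) :
    ∀ m : ℕ, (∀ N, coeff m (p.1 N) = (S α β m).1 N)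
      ∧ (∀ N, coeff m (p.2.1 N) = (S α β m).2.1 N)
      ∧ coeff m p.2.2 = (S α β m).2.2 := by
  intro m
  induction m with
  | zero =>
      refine ⟨?_, ?_, ?_⟩
      · intro N
        match N with
        | 0 => rw [h3, one3]; simp [S]
        | 1 => rw [h2, zero4]; simp [S]
        | (k + 2) => rw [h1 k, zero3]; simp [S]
      · intro N
        match N with
        | 0 => rw [h6, zero4]; simp [S]
        | (k + 1) => rw [h5 k, zero3]; simp [S]
      · rw [h4, zero2]; simp [S]
  | succ m ih =>
      obtain ⟨ihf, ihg, ihq⟩ := ih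
      refine ⟨?_, ?_, ?_⟩
      · intro N
        match N with
        | 0 =>
            rw [congrArg (coeff (m + 1)) h3, coeff1_3, ihf, ihf, ihq]
            rfl
        | 1 =>
            rw [congrArg (coeff (m + 1)) h2, coeff4, ihf, ihf, ihf, ihq]
            rfl
        | (k + 2) =>
            rw [congrArg (coeff (m + 1)) (h1 k), coeff3, ihf, ihf, ihf]
            rfl
      · intro N
        match N with
        | 0 =>
            rw [congrArg (coeff (m + 1)) h6, coeff4, ihf, ihg, ihg, ihq]
            rfl
        | (k + 1) =>
            rw [congrArg (coeff (m + 1)) (h5 k), coeff3, ihg, ihg, ihg]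
            rfl
      · rw [congrArg (coeff (m + 1)) h4, coeff2, ihg, ihq]
        rfl

end TwoStepAux

open TwoStepAux

/-- Existence and uniqueness of the solution of the two-step Knödel–Böhm–Hornik system
together with the support condition. -/
theorem twoStep_system_existsUnique (α β : ℝ) (hα0 : 0 < α) (hα1 : α < 1) (hβ : β = 1 - α) :
    ∃! p : (ℕ → PowerSeries ℝ) × (ℕ → PowerSeries ℝ) × PowerSeries ℝ,
      (∀ N : ℕ, p.1 (N + 2) =
        C (α * β) * X * p.1 (N + 1) + C (α * β) * X * p.1 (N + 3)
          + C (α ^ 2 + β ^ 2) * X * p.1 (N + 2)) ∧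
      (p.1 1 = C (α * β) * X * p.1 0 + C (α * β) * X * p.1 2
          + C (α ^ 2 + β ^ 2) * X * p.1 1 + C (β ^ 2) * X * p.2.2) ∧
      (p.1 0 = 1 + C (α * β) * X * p.1 1 + C (α ^ 2 + β ^ 2) * X * p.1 0
          + C (α * β) * X * p.2.2) ∧
      (p.2.2 = C (α * β) * X * p.2.1 0 + C (α ^ 2) * X * p.2.2) ∧
      (∀ N : ℕ, p.2.1 (N + 1) = C (α * β) * X * p.2.1 N
          + C (α * β) * X * p.2.1 (N + 2) + C (α ^ 2 + β ^ 2) * X * p.2.1 (N + 1)) ∧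
      (p.2.1 0 = C (α * β) * X * p.1 0 + C (α * β) * X * p.2.1 1
          + C (α * β) * X * p.2.2 + C (α ^ 2 + β ^ 2) * X * p.2.1 0) ∧
      (∀ m N : ℕ, m < N → coeff m (p.1 N) = 0 ∧ coeff m (p.2.1 N) = 0) := by
  refine ⟨(fun N => PowerSeries.mk fun m => (S α β m).1 N,
           fun N => PowerSeries.mk fun m => (S α β m).2.1 N,
           PowerSeries.mk fun m => (S α β m).2.2), ⟨?_, ?_, ?_, ?_, ?_, ?_, ?_⟩, ?_⟩
  · intro N
    ext k
    cases k with
    | zero => rw [zero3]; simp [S]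
    | succ m =>
        rw [coeff3]
        simp only [coeff_mk]
        rfl
  · ext k
    cases k with
    | zero => rw [zero4]; simp [S]
    | succ m =>
        rw [coeff4]
        simp only [coeff_mk]
        rfl
  · ext k
    cases k with
    | zero => rw [one3]; simp [S]
    | succ m =>
        rw [coeff1_3]
        simp only [coeff_mk]
        rfl
  · ext k
    cases k with
    | zero => rw [zero2]; simp [S]
    | succ m =>
        rw [coeff2]
        simp only [coeff_mk]
        rfl
  · intro N
    ext k
    cases k with
    | zero => rw [zero3]; simp [S]
    | succ m =>
        rw [coeff3]
        simp only [coeff_mk]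
        rfl
  · ext k
    cases k with
    | zero => rw [zero4]; simp [S]
    | succ m =>
        rw [coeff4]
        simp only [coeff_mk]
        rfl
  · intro m N hmN
    simpa using S_support α β m N hmN
  · rintro q ⟨h1, h2, h3, h4, h5, h6, -⟩
    have key := forced α β q h1 h2 h3 h4 h5 h6
    refine Prod.ext ?_ (Prod.ext ?_ ?_)
    · funext N
      ext m
      simp [(key m).1 N]
    · funext N
      ext m
      simp [(key m).2.1 N]
    · ext m
      simp [(key m).2.2]
end
end

section
/- With D(u,z) = u − 2uzα² − zαβu² + z²α³βu² − zαβ + z²α³β + z²uα⁴ − zuβ² + z²uβ²α², the bivariate series F(u,z) = Σ_{N≥0} u^N·f_N and G(u,z) = Σ_{N≥0} u^N·g_N satisfy, in ℝ[[u,z]]: D·F = −uzα² + uz²α²β²·g_0 − zαβ·f_0 + z²α³β·f_0 + u + u²z²αβ³·g_0, and D·G = −zαβ·(−uzαβ·g_0 + g_0 − zα²·g_0 + uzα²·f_0 − u·f_0). -/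
open PowerSeries Filter

noncomputable section

/-- The variable `u`, viewing `ℝ[[u,z]]` as `(ℝ[[z]])[[u]]`. -/
def U : PowerSeries (PowerSeries ℝ) := PowerSeries.X

/-- The variable `z`, viewing `ℝ[[u,z]]` as `(ℝ[[z]])[[u]]`. -/
def Zv : PowerSeries (PowerSeries ℝ) := PowerSeries.C PowerSeries.X

/-- Real constants inside `ℝ[[u,z]]`. -/
def CC (r : ℝ) : PowerSeries (PowerSeries ℝ) := PowerSeries.C (PowerSeries.C r)

/-- The embedding of `ℝ[[z]]` into `ℝ[[u,z]]` as series constant in `u`. -/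
def CP (h : PowerSeries ℝ) : PowerSeries (PowerSeries ℝ) := PowerSeries.C h

lemma structured (c0 c1 : PowerSeries ℝ) (f : ℕ → PowerSeries ℝ) (s0 s1 s2 : PowerSeries ℝ)
    (h0 : c0 * f 0 = s0)
    (h1 : c0 * f 1 + c1 * f 0 = s1)
    (h2 : c0 * f 2 + c1 * f 1 + c0 * f 0 = s2)
    (h3 : ∀ n : ℕ, c0 * f (n + 3) + c1 * f (n + 2) + c0 * f (n + 1) = 0) :
    C c0 * PowerSeries.mk f + X * (C c1 * PowerSeries.mk f)
      + X * (X * (C c0 * PowerSeries.mk f))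
      = C s0 + X * C s1 + X * (X * C s2) := by
  apply PowerSeries.ext
  intro n
  match n with
  | 0 => simp [coeff_X, coeff_C_mul, coeff_mk, coeff_zero_X_mul, h0]
  | 1 => simp [coeff_X, coeff_C_mul, coeff_mk, coeff_succ_X_mul, coeff_zero_X_mul, coeff_C, coeff_X, h1]
  | 2 => simp [coeff_X, coeff_C_mul, coeff_mk, coeff_succ_X_mul, coeff_zero_X_mul, coeff_C, coeff_X, h2]
  | (n + 3) => simp [coeff_X, coeff_C_mul, coeff_mk, coeff_succ_X_mul, coeff_C, coeff_X, h3 n]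

/-- The solved (still implicit) forms `D·F` and `D·G` of the two-step bivariate
generating functions, with the kernel `D`. -/
theorem twoStep_solved_forms
    (α β : ℝ) (hα0 : 0 < α) (hα1 : α < 1) (hβ : β = 1 - α)
    (f g : ℕ → PowerSeries ℝ) (fQ : PowerSeries ℝ)
    (hf : ∀ N : ℕ, f (N + 2) =
      C (α * β) * X * f (N + 1) + C (α * β) * X * f (N + 3)
        + C (α ^ 2 + β ^ 2) * X * f (N + 2))
    (hf1 : f 1 = C (α * β) * X * f 0 + C (α * β) * X * f 2
        + C (α ^ 2 + β ^ 2) * X * f 1 + C (β ^ 2) * X * fQ)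
    (hf0 : f 0 = 1 + C (α * β) * X * f 1 + C (α ^ 2 + β ^ 2) * X * f 0
        + C (α * β) * X * fQ)
    (hfQ : fQ = C (α * β) * X * g 0 + C (α ^ 2) * X * fQ)
    (hg : ∀ N : ℕ, g (N + 1) = C (α * β) * X * g N + C (α * β) * X * g (N + 2)
        + C (α ^ 2 + β ^ 2) * X * g (N + 1))
    (hg0 : g 0 = C (α * β) * X * f 0 + C (α * β) * X * g 1
        + C (α * β) * X * fQ + C (α ^ 2 + β ^ 2) * X * g 0)
    (hsupp : ∀ m N : ℕ, m < N → coeff m (f N) = 0 ∧ coeff m (g N) = 0) :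
    (U - 2 * U * Zv * CC (α ^ 2) - Zv * CC (α * β) * U ^ 2 + Zv ^ 2 * CC (α ^ 3 * β) * U ^ 2
        - Zv * CC (α * β) + Zv ^ 2 * CC (α ^ 3 * β) + Zv ^ 2 * U * CC (α ^ 4)
        - Zv * U * CC (β ^ 2) + Zv ^ 2 * U * CC (β ^ 2 * α ^ 2)) * PowerSeries.mk f =
      -(U * Zv * CC (α ^ 2)) + U * Zv ^ 2 * CC (α ^ 2 * β ^ 2) * CP (g 0)
        - Zv * CC (α * β) * CP (f 0) + Zv ^ 2 * CC (α ^ 3 * β) * CP (f 0)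
        + U + U ^ 2 * Zv ^ 2 * CC (α * β ^ 3) * CP (g 0) ∧
    (U - 2 * U * Zv * CC (α ^ 2) - Zv * CC (α * β) * U ^ 2 + Zv ^ 2 * CC (α ^ 3 * β) * U ^ 2
        - Zv * CC (α * β) + Zv ^ 2 * CC (α ^ 3 * β) + Zv ^ 2 * U * CC (α ^ 4)
        - Zv * U * CC (β ^ 2) + Zv ^ 2 * U * CC (β ^ 2 * α ^ 2)) * PowerSeries.mk g =
      -(Zv * CC (α * β)) * (-(U * Zv * CC (α * β)) * CP (g 0) + CP (g 0)
        - Zv * CC (α ^ 2) * CP (g 0) + U * Zv * CC (α ^ 2) * CP (f 0) - U * CP (f 0)) := by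
  simp only [map_mul, map_pow, map_add] at hf hf1 hf0 hfQ hg hg0
  set a : PowerSeries ℝ := C α with ha
  set b : PowerSeries ℝ := C β with hb
  set x : PowerSeries ℝ := X with hx
  set c0 : PowerSeries ℝ := -(x * a * b) + x ^ 2 * a ^ 3 * b with hc0
  set c1 : PowerSeries ℝ :=
    1 - 2 * x * a ^ 2 + x ^ 2 * a ^ 4 - x * b ^ 2 + x ^ 2 * b ^ 2 * a ^ 2 with hc1
  constructor
  · calc
      _ = C c0 * PowerSeries.mk f + X * (C c1 * PowerSeries.mk f)
            + X * (X * (C c0 * PowerSeries.mk f)) := by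
        simp only [U, Zv, CC, CP, hc0, hc1, ha, hb, hx, map_mul, map_pow, map_add, map_sub,
          map_neg, map_one, map_ofNat]
        ring
      _ = C (c0 * f 0) + X * C (1 - x * a ^ 2 + x ^ 2 * a ^ 2 * b ^ 2 * g 0)
            + X * (X * C (x ^ 2 * a * b ^ 3 * g 0)) := by
        apply structured
        · rfl
        · linear_combination (1 - a ^ 2 * x) * hf0 + (a * b * x) * hfQ
        · linear_combination (1 - a ^ 2 * x) * hf1 + (b ^ 2 * x) * hfQ
        · intro n
          linear_combination (1 - a ^ 2 * x) * hf n
      _ = _ := by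
        simp only [U, Zv, CC, CP, hc0, hc1, ha, hb, hx, map_mul, map_pow, map_add, map_sub,
          map_neg, map_one, map_ofNat]
        ring
  · calc
      _ = C c0 * PowerSeries.mk g + X * (C c1 * PowerSeries.mk g)
            + X * (X * (C c0 * PowerSeries.mk g)) := by
        simp only [U, Zv, CC, CP, hc0, hc1, ha, hb, hx, map_mul, map_pow, map_add, map_sub,
          map_neg, map_one, map_ofNat]
        ring
      _ = C (c0 * g 0)
            + X * C (x * a * b * (1 - x * a ^ 2) * f 0 + x ^ 2 * a ^ 2 * b ^ 2 * g 0)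
            + X * (X * C 0) := by
        apply structured
        · rfl
        · linear_combination (1 - a ^ 2 * x) * hg0 + (a * b * x) * hfQ
        · linear_combination (1 - a ^ 2 * x) * hg 0
        · intro n
          linear_combination (1 - a ^ 2 * x) * hg (n + 1)
      _ = _ := by
        simp only [U, Zv, CC, CP, hc0, hc1, ha, hb, hx, map_mul, map_pow, map_add, map_sub,
          map_neg, map_one, map_ofNat, map_zero]
        ring
end
end

section
/- The composition f_0∘Z satisfies, in ℝ[[v]]: αβ·(1−v³)·(f_0∘Z) = (vα+β)(α+vβ). -/
open PowerSeries Filter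

noncomputable section

/-- Composition `h ∘ Z` of formal power series; this is the usual composition whenever
`Z` has zero constant term (then for each `n` only finitely many terms contribute). -/
def psComp (h Z : PowerSeries ℝ) : PowerSeries ℝ :=
  PowerSeries.mk fun n => ∑' k : ℕ, (PowerSeries.coeff k h) * (PowerSeries.coeff n (Z ^ k))

/-- The substitution series `Z = v · ((α+βv)(β+αv))⁻¹ ∈ ℝ[[v]]`; the inverse exists since
the constant term `αβ` is nonzero, and `Z` has zero constant term. -/
def Zsub (α β : ℝ) : PowerSeries ℝ :=
  PowerSeries.X * (((PowerSeries.C α) + (PowerSeries.C β) * PowerSeries.X) *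
    ((PowerSeries.C β) + (PowerSeries.C α) * PowerSeries.X))⁻¹

lemma psAux_coeff_pow_of_lt {Z : PowerSeries ℝ} (hZ : constantCoeff Z = 0)
    {k n : ℕ} (h : n < k) : coeff n (Z ^ k) = 0 := by
  obtain ⟨ψ, hψ⟩ := PowerSeries.X_dvd_iff.mpr hZ
  rw [hψ, mul_pow, PowerSeries.coeff_X_pow_mul', if_neg (by omega)]

lemma psAux_coeff_psComp {Z : PowerSeries ℝ} (hZ : constantCoeff Z = 0)
    (h : PowerSeries ℝ) (n : ℕ) :
    coeff n (psComp h Z) =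
      ∑ k ∈ Finset.range (n + 1), coeff k h * coeff n (Z ^ k) := by
  rw [psComp, coeff_mk]
  refine tsum_eq_sum fun k hk => ?_
  rw [psAux_coeff_pow_of_lt hZ (by simpa using hk), mul_zero]

lemma psAux_psComp_add {Z : PowerSeries ℝ} (hZ : constantCoeff Z = 0)
    (h₁ h₂ : PowerSeries ℝ) :
    psComp (h₁ + h₂) Z = psComp h₁ Z + psComp h₂ Z := by
  ext n
  simp only [psAux_coeff_psComp hZ, map_add, add_mul, Finset.sum_add_distrib]

lemma psAux_psComp_C_mul {Z : PowerSeries ℝ} (hZ : constantCoeff Z = 0)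
    (c : ℝ) (h : PowerSeries ℝ) :
    psComp (C c * h) Z = C c * psComp h Z := by
  ext n
  simp only [psAux_coeff_psComp hZ, PowerSeries.coeff_C_mul, Finset.mul_sum, mul_assoc]

lemma psAux_psComp_one {Z : PowerSeries ℝ} (hZ : constantCoeff Z = 0) :
    psComp 1 Z = 1 := by
  ext n
  rw [psAux_coeff_psComp hZ]
  simp [PowerSeries.coeff_one, ite_mul, Finset.sum_ite_eq]

lemma psAux_psComp_X_mul {Z : PowerSeries ℝ} (hZ : constantCoeff Z = 0)
    (h : PowerSeries ℝ) :
    psComp (X * h) Z = Z * psComp h Z := by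
  ext n
  rw [psAux_coeff_psComp hZ, PowerSeries.coeff_mul]
  have hstep : ∀ p ∈ Finset.HasAntidiagonal.antidiagonal n,
      coeff p.1 Z * coeff p.2 (psComp h Z) =
      ∑ j ∈ Finset.range (n + 1), coeff p.1 Z * (coeff j h * coeff p.2 (Z ^ j)) := by
    intro p hp
    have hp2 : p.2 ≤ n := by
      have := Finset.HasAntidiagonal.antidiagonal.snd_le hp
      omega
    rw [psAux_coeff_psComp hZ, Finset.mul_sum]
    refine Finset.sum_subset (Finset.range_subset_range.mpr (by omega)) fun j hj hj' => ?_
    simp only [Finset.mem_range] at hj hj'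
    rw [psAux_coeff_pow_of_lt hZ (by omega), mul_zero, mul_zero]
  rw [Finset.sum_congr rfl hstep, Finset.sum_comm]
  have hterm : ∀ j ∈ Finset.range (n + 1),
      (∑ p ∈ Finset.HasAntidiagonal.antidiagonal n, coeff p.1 Z * (coeff j h * coeff p.2 (Z ^ j)))
        = coeff j h * coeff n (Z ^ (j + 1)) := by
    intro j _
    rw [pow_succ', PowerSeries.coeff_mul, Finset.mul_sum]
    refine Finset.sum_congr rfl fun p hp => by ring
  rw [Finset.sum_congr rfl hterm,
    Finset.sum_range_succ' (fun k => coeff k (X * h) * coeff n (Z ^ k)) n,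
    Finset.sum_range_succ (fun j => coeff j h * coeff n (Z ^ (j + 1))) n]
  have h0 : coeff 0 (X * h) * coeff n (Z ^ 0) = 0 := by
    simp [PowerSeries.coeff_zero_eq_constantCoeff]
  rw [h0, add_zero, psAux_coeff_pow_of_lt hZ (Nat.lt_succ_self n), mul_zero, add_zero]
  exact Finset.sum_congr rfl fun i _ => by rw [PowerSeries.coeff_succ_X_mul]

lemma psAux_psComp_CX_mul {Z : PowerSeries ℝ} (hZ : constantCoeff Z = 0)
    (c : ℝ) (h : PowerSeries ℝ) :
    psComp (C c * X * h) Z = C c * (Z * psComp h Z) := by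
  rw [mul_assoc, psAux_psComp_C_mul hZ, psAux_psComp_X_mul hZ]

lemma psAux_chain_zero (s : ℕ → PowerSeries ℝ) (h : ∀ N, s N = X * s (N + 1)) :
    s 0 = 0 := by
  have key : ∀ m, s 0 = X ^ m * s m := by
    intro m
    induction m with
    | zero => simp
    | succ m ih => rw [ih, h m, ← mul_assoc, ← pow_succ]
  ext n
  rw [key (n + 1), PowerSeries.coeff_X_pow_mul', if_neg (by omega), map_zero]

lemma psAux_cancel {x y : PowerSeries ℝ} (hx : constantCoeff x ≠ 0)
    (h : x * y = 0) : y = 0 := by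
  refine (mul_eq_zero.mp h).resolve_left fun h0 => hx ?_
  rw [h0, map_zero]

/-- After the substitution `z = v/((α+βv)(β+αv))`, the series `f₀` becomes rational:
`αβ(1-v³)·(f₀∘Z) = (vα+β)(α+vβ)`. -/
theorem twoStep_f0_substituted
    (α β : ℝ) (hα0 : 0 < α) (hα1 : α < 1) (hβ : β = 1 - α)
    (f g : ℕ → PowerSeries ℝ) (fQ : PowerSeries ℝ)
    (hf : ∀ N : ℕ, f (N + 2) =
      C (α * β) * X * f (N + 1) + C (α * β) * X * f (N + 3)
        + C (α ^ 2 + β ^ 2) * X * f (N + 2))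
    (hf1 : f 1 = C (α * β) * X * f 0 + C (α * β) * X * f 2
        + C (α ^ 2 + β ^ 2) * X * f 1 + C (β ^ 2) * X * fQ)
    (hf0 : f 0 = 1 + C (α * β) * X * f 1 + C (α ^ 2 + β ^ 2) * X * f 0
        + C (α * β) * X * fQ)
    (hfQ : fQ = C (α * β) * X * g 0 + C (α ^ 2) * X * fQ)
    (hg : ∀ N : ℕ, g (N + 1) = C (α * β) * X * g N + C (α * β) * X * g (N + 2)
        + C (α ^ 2 + β ^ 2) * X * g (N + 1))
    (hg0 : g 0 = C (α * β) * X * f 0 + C (α * β) * X * g 1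
        + C (α * β) * X * fQ + C (α ^ 2 + β ^ 2) * X * g 0)
    (hsupp : ∀ m N : ℕ, m < N → coeff m (f N) = 0 ∧ coeff m (g N) = 0) :
    C (α * β) * (1 - X ^ 3) * psComp (f 0) (Zsub α β) =
      (X * C α + C β) * (C α + X * C β) := by
  have hβ0 : 0 < β := by rw [hβ]; linarith
  set a : PowerSeries ℝ := C α with ha
  set b : PowerSeries ℝ := C β with hb
  set R : PowerSeries ℝ := Zsub α β with hR
  set D : PowerSeries ℝ := (a + b * X) * (b + a * X) with hD
  -- constant coefficient facts
  have hDc : constantCoeff D = α * β := by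
    simp [hD, ha, hb, map_mul, map_add]
  have hDc0 : constantCoeff D ≠ 0 := by
    rw [hDc]; positivity
  have hZ : constantCoeff R = 0 := by
    simp [hR, Zsub, map_mul]
  have hDZ : D * R = X := by
    rw [hR, Zsub, ← hD]
    calc D * (X * D⁻¹) = X * (D * D⁻¹) := by ring
    _ = X := by rw [PowerSeries.mul_inv_cancel _ hDc0, mul_one]
  -- constants in terms of a, b
  have hC1 : C (α * β) = a * b := by rw [map_mul]
  have hC2 : C (α ^ 2 + β ^ 2) = a ^ 2 + b ^ 2 := by rw [map_add, map_pow, map_pow]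
  have hC3 : C (β ^ 2) = b ^ 2 := by rw [map_pow]
  have hC4 : C (α ^ 2) = a ^ 2 := by rw [map_pow]
  have hab0 : (a * b : PowerSeries ℝ) ≠ 0 := fun h => by
    have := congrArg (constantCoeff) h
    simp [ha, hb, map_mul] at this
    rcases this with h | h
    · exact absurd h (ne_of_gt hα0)
    · exact absurd h (ne_of_gt hβ0)
  have habc : constantCoeff (a * b) ≠ 0 := by
    simp only [ha, hb, map_mul, constantCoeff_C]
    positivity
  have haXc : constantCoeff (a + b * X) ≠ 0 := by
    simp only [ha, hb, map_add, map_mul, constantCoeff_C, constantCoeff_X, mul_zero, add_zero]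
    exact ne_of_gt hα0
  have hbc : constantCoeff b ≠ 0 := by
    simp only [hb, constantCoeff_C]; exact ne_of_gt hβ0
  have hac : constantCoeff a ≠ 0 := by
    simp only [ha, constantCoeff_C]; exact ne_of_gt hα0
  -- transferred equations
  set u : ℕ → PowerSeries ℝ := fun N => psComp (f N) R with hu
  set w : ℕ → PowerSeries ℝ := fun N => psComp (g N) R with hw
  set P : PowerSeries ℝ := psComp fQ R with hP
  have tf : ∀ N, u (N + 2) = C (α * β) * (R * u (N + 1)) + C (α * β) * (R * u (N + 3))
      + C (α ^ 2 + β ^ 2) * (R * u (N + 2)) := by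
    intro N
    have := congrArg (fun h => psComp h R) (hf N)
    simpa only [psAux_psComp_add hZ, psAux_psComp_CX_mul hZ] using this
  have tf1 : u 1 = C (α * β) * (R * u 0) + C (α * β) * (R * u 2)
      + C (α ^ 2 + β ^ 2) * (R * u 1) + C (β ^ 2) * (R * P) := by
    have := congrArg (fun h => psComp h R) hf1
    simpa only [psAux_psComp_add hZ, psAux_psComp_CX_mul hZ] using this
  have tf0 : u 0 = 1 + C (α * β) * (R * u 1) + C (α ^ 2 + β ^ 2) * (R * u 0)
      + C (α * β) * (R * P) := by
    have := congrArg (fun h => psComp h R) hf0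
    simpa only [psAux_psComp_add hZ, psAux_psComp_CX_mul hZ, psAux_psComp_one hZ] using this
  have tfQ : P = C (α * β) * (R * w 0) + C (α ^ 2) * (R * P) := by
    have := congrArg (fun h => psComp h R) hfQ
    simpa only [psAux_psComp_add hZ, psAux_psComp_CX_mul hZ] using this
  have tg : ∀ N, w (N + 1) = C (α * β) * (R * w N) + C (α * β) * (R * w (N + 2))
      + C (α ^ 2 + β ^ 2) * (R * w (N + 1)) := by
    intro N
    have := congrArg (fun h => psComp h R) (hg N)
    simpa only [psAux_psComp_add hZ, psAux_psComp_CX_mul hZ] using this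
  have tg0 : w 0 = C (α * β) * (R * u 0) + C (α * β) * (R * w 1)
      + C (α * β) * (R * P) + C (α ^ 2 + β ^ 2) * (R * w 0) := by
    have := congrArg (fun h => psComp h R) hg0
    simpa only [psAux_psComp_add hZ, psAux_psComp_CX_mul hZ] using this
  -- multiply through by D using D * R = X
  have E1 : ∀ N, D * u (N + 2) = a * b * X * u (N + 1) + a * b * X * u (N + 3)
      + (a ^ 2 + b ^ 2) * X * u (N + 2) := by
    intro N
    have h := tf N
    rw [hC1, hC2] at h
    linear_combination D * h + (a * b * u (N + 1) + a * b * u (N + 3)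
      + (a ^ 2 + b ^ 2) * u (N + 2)) * hDZ
  have E2 : D * u 1 = a * b * X * u 0 + a * b * X * u 2 + (a ^ 2 + b ^ 2) * X * u 1
      + b ^ 2 * X * P := by
    have h := tf1
    rw [hC1, hC2, hC3] at h
    linear_combination D * h + (a * b * u 0 + a * b * u 2 + (a ^ 2 + b ^ 2) * u 1
      + b ^ 2 * P) * hDZ
  have E3 : D * u 0 = D + a * b * X * u 1 + (a ^ 2 + b ^ 2) * X * u 0 + a * b * X * P := by
    have h := tf0
    rw [hC1, hC2] at h
    linear_combination D * h + (a * b * u 1 + (a ^ 2 + b ^ 2) * u 0 + a * b * P) * hDZ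
  have E4 : D * P = a * b * X * w 0 + a ^ 2 * X * P := by
    have h := tfQ
    rw [hC1, hC4] at h
    linear_combination D * h + (a * b * w 0 + a ^ 2 * P) * hDZ
  have E5 : ∀ N, D * w (N + 1) = a * b * X * w N + a * b * X * w (N + 2)
      + (a ^ 2 + b ^ 2) * X * w (N + 1) := by
    intro N
    have h := tg N
    rw [hC1, hC2] at h
    linear_combination D * h + (a * b * w N + a * b * w (N + 2)
      + (a ^ 2 + b ^ 2) * w (N + 1)) * hDZ
  have E6 : D * w 0 = a * b * X * u 0 + a * b * X * w 1 + a * b * X * P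
      + (a ^ 2 + b ^ 2) * X * w 0 := by
    have h := tg0
    rw [hC1, hC2] at h
    linear_combination D * h + (a * b * u 0 + a * b * w 1 + a * b * P
      + (a ^ 2 + b ^ 2) * w 0) * hDZ
  -- the telescoping chains
  have hu2 : u 2 = X * u 1 := by
    have hd : ∀ N, u (N + 2) - X * u (N + 1) = X * (u (N + 3) - X * u (N + 2)) := by
      intro N
      have key : a * b * ((u (N + 2) - X * u (N + 1)) - X * (u (N + 3) - X * u (N + 2))) = 0 := by
        linear_combination E1 N
      have := psAux_cancel habc key
      exact sub_eq_zero.mp this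
    have h0 := psAux_chain_zero (fun m => u (m + 2) - X * u (m + 1)) fun N => hd N
    simpa [sub_eq_zero] using h0
  have hw1 : w 1 = X * w 0 := by
    have hd : ∀ N, w (N + 1) - X * w N = X * (w (N + 2) - X * w (N + 1)) := by
      intro N
      have key : a * b * ((w (N + 1) - X * w N) - X * (w (N + 2) - X * w (N + 1))) = 0 := by
        linear_combination E5 N
      have := psAux_cancel habc key
      exact sub_eq_zero.mp this
    have h0 := psAux_chain_zero (fun m => w (m + 1) - X * w m) fun N => hd N
    simpa [sub_eq_zero] using h0
  -- solve the boundary system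
  have c1 : w 0 = X * u 0 + X * P := by
    have key : a * b * (w 0 - (X * u 0 + X * P)) = 0 := by
      linear_combination E6 + a * b * X * hw1
    simpa [sub_eq_zero] using psAux_cancel habc key
  have c2 : P * (a + b * X) = a * X ^ 2 * u 0 := by
    have key : b * (P * (a + b * X) - a * X ^ 2 * u 0) = 0 := by
      linear_combination E4 + a * b * X * c1
    simpa [sub_eq_zero] using psAux_cancel hbc key
  have c3 : u 1 * (a + b * X) = X * u 0 * (a + b * X) + b * X ^ 3 * u 0 := by
    have key : a * b * (u 1 * (a + b * X) - (X * u 0 * (a + b * X) + b * X ^ 3 * u 0)) = 0 := by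
      linear_combination (a + b * X) * E2 + a * b * X * (a + b * X) * hu2 + b ^ 2 * X * c2
    simpa [sub_eq_zero] using psAux_cancel habc key
  have final : (a + b * X) * (a * b * (1 - X ^ 3) * u 0 - (X * a + b) * (a + X * b)) = 0 := by
    linear_combination (a + b * X) * E3 + a * b * X * c3 + a * b * X * c2
  have := psAux_cancel haXc final
  rw [sub_eq_zero] at this
  rw [hC1]
  exact this
end
end

section
/- The composition g_0∘Z satisfies, in ℝ[[v]]: αβ·(1−v³)·(g_0∘Z) = v·(α + αv² + vβ)·(vα+β). -/
open PowerSeries Filter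

noncomputable section

section Helpers

variable {Z : PowerSeries ℝ}

theorem psComp_coeff (hZ : ∀ n k : ℕ, n < k → coeff n (Z ^ k) = 0) (h : PowerSeries ℝ) (n : ℕ) :
    coeff n (psComp h Z) =
      ∑ k ∈ Finset.range (n + 1), coeff k h * coeff n (Z ^ k) := by
  rw [psComp, coeff_mk]
  exact tsum_eq_sum fun k hk => by
    rw [hZ n k (by simpa using Finset.mem_range.not.mp hk), mul_zero]

theorem psComp_one (hZ : ∀ n k : ℕ, n < k → coeff n (Z ^ k) = 0) : psComp 1 Z = 1 := by
  ext n
  rw [psComp_coeff hZ]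
  rw [Finset.sum_eq_single 0]
  · simp
  · intro k _ hk
    rw [PowerSeries.coeff_one]
    simp [hk]
  · simp

theorem psComp_add (hZ : ∀ n k : ℕ, n < k → coeff n (Z ^ k) = 0) (a b : PowerSeries ℝ) :
    psComp (a + b) Z = psComp a Z + psComp b Z := by
  ext n
  simp only [map_add, psComp_coeff hZ, ← Finset.sum_add_distrib]
  exact Finset.sum_congr rfl fun k _ => by rw [add_mul]

theorem psComp_Cmul (hZ : ∀ n k : ℕ, n < k → coeff n (Z ^ k) = 0) (c : ℝ) (h : PowerSeries ℝ) :
    psComp (C c * h) Z = C c * psComp h Z := by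
  ext n
  simp only [psComp_coeff hZ, coeff_C_mul, Finset.mul_sum, mul_assoc]

theorem psComp_Xmul (hZ : ∀ n k : ℕ, n < k → coeff n (Z ^ k) = 0) (h : PowerSeries ℝ) :
    psComp (X * h) Z = Z * psComp h Z := by
  ext n
  rw [psComp_coeff hZ, PowerSeries.coeff_mul]
  have hr : ∀ p ∈ Finset.HasAntidiagonal.antidiagonal n,
      coeff p.1 Z * coeff p.2 (psComp h Z) =
        ∑ j ∈ Finset.range (n + 1), coeff p.1 Z * (coeff j h * coeff p.2 (Z ^ j)) := by
    intro p hp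
    rw [psComp_coeff hZ, Finset.mul_sum]
    apply Finset.sum_subset
    · apply Finset.range_subset_range.mpr
      have := Finset.HasAntidiagonal.antidiagonal.snd_le hp
      omega
    · intro j _ hj
      rw [hZ p.2 j (by simp only [Finset.mem_range, not_lt] at hj ⊢; omega), mul_zero, mul_zero]
  rw [Finset.sum_congr rfl hr, Finset.sum_comm]
  have hR : ∀ j ∈ Finset.range (n + 1),
      (∑ p ∈ Finset.HasAntidiagonal.antidiagonal n, coeff p.1 Z * (coeff j h * coeff p.2 (Z ^ j))) =
        coeff j h * coeff n (Z ^ (j + 1)) := by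
    intro j _
    rw [pow_succ', PowerSeries.coeff_mul, Finset.mul_sum]
    exact Finset.sum_congr rfl fun p _ => by ring
  rw [Finset.sum_congr rfl hR, Finset.sum_range_succ', Finset.sum_range_succ,
    hZ n (n + 1) (by omega), mul_zero, add_zero]
  simp only [coeff_succ_X_mul, coeff_zero_X_mul, zero_mul, add_zero]

theorem psComp_CXmul (hZ : ∀ n k : ℕ, n < k → coeff n (Z ^ k) = 0) (c : ℝ) (h : PowerSeries ℝ) :
    psComp (C c * X * h) Z = C c * Z * psComp h Z := by
  rw [mul_assoc, psComp_Cmul hZ, psComp_Xmul hZ, mul_assoc]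

end Helpers

/-- A power-series-valued sequence with `H N = X * H (N+1)` for all `N` is identically zero. -/
theorem telescope_zero (H : ℕ → PowerSeries ℝ) (h : ∀ N, H N = X * H (N + 1)) :
    ∀ N, H N = 0 := by
  have key : ∀ m, ∀ N, coeff m (H N) = 0 := by
    intro m
    induction m with
    | zero => intro N; rw [h N, coeff_zero_X_mul]
    | succ m ih => intro N; rw [h N, coeff_succ_X_mul]; exact ih (N + 1)
  intro N; ext m; rw [key m N, map_zero]

/-- Cancellation by a series with nonzero constant coefficient. -/
theorem cancelC {x y z : PowerSeries ℝ} (hx : constantCoeff x ≠ 0) (h : x * y = x * z) :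
    y = z :=
  mul_left_cancel₀ (fun h0 => hx (by rw [h0, map_zero])) h

/-- After the substitution `z = v/((α+βv)(β+αv))`, the series `g₀` becomes rational:
`αβ(1-v³)·(g₀∘Z) = v(α+αv²+vβ)(vα+β)`. -/
theorem twoStep_g0_substituted
    (α β : ℝ) (hα0 : 0 < α) (hα1 : α < 1) (hβ : β = 1 - α)
    (f g : ℕ → PowerSeries ℝ) (fQ : PowerSeries ℝ)
    (hf : ∀ N : ℕ, f (N + 2) =
      C (α * β) * X * f (N + 1) + C (α * β) * X * f (N + 3)
        + C (α ^ 2 + β ^ 2) * X * f (N + 2))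
    (hf1 : f 1 = C (α * β) * X * f 0 + C (α * β) * X * f 2
        + C (α ^ 2 + β ^ 2) * X * f 1 + C (β ^ 2) * X * fQ)
    (hf0 : f 0 = 1 + C (α * β) * X * f 1 + C (α ^ 2 + β ^ 2) * X * f 0
        + C (α * β) * X * fQ)
    (hfQ : fQ = C (α * β) * X * g 0 + C (α ^ 2) * X * fQ)
    (hg : ∀ N : ℕ, g (N + 1) = C (α * β) * X * g N + C (α * β) * X * g (N + 2)
        + C (α ^ 2 + β ^ 2) * X * g (N + 1))
    (hg0 : g 0 = C (α * β) * X * f 0 + C (α * β) * X * g 1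
        + C (α * β) * X * fQ + C (α ^ 2 + β ^ 2) * X * g 0)
    (hsupp : ∀ m N : ℕ, m < N → coeff m (f N) = 0 ∧ coeff m (g N) = 0) :
    C (α * β) * (1 - X ^ 3) * psComp (g 0) (Zsub α β) =
      X * (C α + C α * X ^ 2 + X * C β) * (X * C α + C β) := by
  have hβ0 : 0 < β := by rw [hβ]; linarith
  have hab : α * β ≠ 0 := by positivity
  set A : PowerSeries ℝ := C α with hA
  set B : PowerSeries ℝ := C β with hB
  set Zv : PowerSeries ℝ := Zsub α β with hZv
  have hUc : constantCoeff ((A + B * X) * (B + A * X)) ≠ 0 := by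
    rw [hA, hB]; simp [mul_comm, hab]
  have hUZ : (A + B * X) * (B + A * X) * Zv = X := by
    rw [hZv, Zsub, ← hA, ← hB, ← mul_assoc, mul_comm _ X, mul_assoc,
      PowerSeries.mul_inv_cancel _ hUc, mul_one]
  have hZ : ∀ n k : ℕ, n < k → coeff n (Zv ^ k) = 0 := by
    intro n k hnk
    have hdvd : (X : PowerSeries ℝ) ^ k ∣ Zv ^ k :=
      pow_dvd_pow_of_dvd ⟨_, rfl⟩ k
    exact PowerSeries.X_pow_dvd_iff.mp hdvd n hnk
  have hAc : constantCoeff A ≠ 0 := by rw [hA]; simpa using hα0.ne'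
  have hBc : constantCoeff B ≠ 0 := by rw [hB]; simpa using hβ0.ne'
  have hABc : constantCoeff (A * B) ≠ 0 := by rw [map_mul]; exact mul_ne_zero hAc hBc
  have hABXc : constantCoeff (A + B * X) ≠ 0 := by
    rw [map_add, map_mul]; simpa [hA, hB] using hα0.ne'
  have Cab : C (α * β) = A * B := by rw [map_mul]
  have Cab2 : C (α ^ 2 + β ^ 2) = A ^ 2 + B ^ 2 := by rw [map_add, map_pow, map_pow]
  have Cb2 : C (β ^ 2) = B ^ 2 := by rw [map_pow]
  have Ca2 : C (α ^ 2) = A ^ 2 := by rw [map_pow]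
  -- the telescoping recurrence for g: G (N+1) = X * G N is forced
  have hG1 : psComp (g 1) Zv = X * psComp (g 0) Zv := by
    have HtG : ∀ N, psComp (g (N + 1)) Zv - X * psComp (g N) Zv =
        X * (psComp (g (N + 2)) Zv - X * psComp (g (N + 1)) Zv) := by
      intro N
      have h1 := congrArg (fun p => psComp p Zv) (hg N)
      simp only [psComp_add hZ, psComp_CXmul hZ] at h1
      simp only [Cab, Cab2] at h1
      refine cancelC hABc ?_
      linear_combination ((A + B * X) * (B + A * X)) * h1
        + (A * B * (psComp (g N) Zv + psComp (g (N + 2)) Zv)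
          + (A ^ 2 + B ^ 2) * psComp (g (N + 1)) Zv) * hUZ
    have := telescope_zero _ HtG 0
    rw [sub_eq_zero] at this
    exact this
  -- the telescoping recurrence for f: F (N+2) = X * F (N+1) is forced
  have hF2 : psComp (f 2) Zv = X * psComp (f 1) Zv := by
    have HtF : ∀ N, psComp (f (N + 2)) Zv - X * psComp (f (N + 1)) Zv =
        X * (psComp (f (N + 3)) Zv - X * psComp (f (N + 2)) Zv) := by
      intro N
      have h1 := congrArg (fun p => psComp p Zv) (hf N)
      simp only [psComp_add hZ, psComp_CXmul hZ] at h1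
      simp only [Cab, Cab2] at h1
      refine cancelC hABc ?_
      linear_combination ((A + B * X) * (B + A * X)) * h1
        + (A * B * (psComp (f (N + 1)) Zv + psComp (f (N + 3)) Zv)
          + (A ^ 2 + B ^ 2) * psComp (f (N + 2)) Zv) * hUZ
    have := telescope_zero
      (fun N => psComp (f (N + 2)) Zv - X * psComp (f (N + 1)) Zv) HtF 0
    rw [sub_eq_zero] at this
    exact this
  -- substituted boundary equations
  have h1f1 := congrArg (fun p => psComp p Zv) hf1
  simp only [psComp_add hZ, psComp_CXmul hZ] at h1f1
  simp only [Cab, Cab2, Cb2] at h1f1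
  have h1f0 := congrArg (fun p => psComp p Zv) hf0
  simp only [psComp_add hZ, psComp_one hZ, psComp_CXmul hZ] at h1f0
  simp only [Cab, Cab2] at h1f0
  have h1fQ := congrArg (fun p => psComp p Zv) hfQ
  simp only [psComp_add hZ, psComp_CXmul hZ] at h1fQ
  simp only [Cab, Ca2] at h1fQ
  have h1g0 := congrArg (fun p => psComp p Zv) hg0
  simp only [psComp_add hZ, psComp_CXmul hZ] at h1g0
  simp only [Cab, Cab2] at h1g0
  -- derived linear equations
  have e1 : A * psComp (f 1) Zv = A * X * psComp (f 0) Zv + B * X * psComp fQ Zv := by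
    refine cancelC hBc ?_
    linear_combination ((A + B * X) * (B + A * X)) * h1f1
      + (A * B * (psComp (f 0) Zv + psComp (f 2) Zv) + (A ^ 2 + B ^ 2) * psComp (f 1) Zv
        + B ^ 2 * psComp fQ Zv) * hUZ + A * B * X * hF2
  have e2 : A * B * psComp (f 0) Zv =
      (A + B * X) * (B + A * X) + B * X * (A + B * X) * psComp fQ Zv := by
    refine cancelC hAc ?_
    have e2' : A * B * (1 + X ^ 2) * psComp (f 0) Zv = (A + B * X) * (B + A * X)
        + A * B * X * psComp (f 1) Zv + A * B * X * psComp fQ Zv := by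
      linear_combination ((A + B * X) * (B + A * X)) * h1f0
        + (A * B * psComp (f 1) Zv + (A ^ 2 + B ^ 2) * psComp (f 0) Zv
          + A * B * psComp fQ Zv) * hUZ
    linear_combination A * e2' + A * B * X * e1
  have e3 : (A + B * X + A * X ^ 2) * psComp fQ Zv = A * X * psComp (g 0) Zv := by
    refine cancelC hBc ?_
    linear_combination ((A + B * X) * (B + A * X)) * h1fQ
      + (A * B * psComp (g 0) Zv + A ^ 2 * psComp fQ Zv) * hUZ
  have e4 : psComp (g 0) Zv = X * psComp (f 0) Zv + X * psComp fQ Zv := by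
    refine cancelC hABc ?_
    linear_combination ((A + B * X) * (B + A * X)) * h1g0
      + (A * B * (psComp (f 0) Zv + psComp (g 1) Zv + psComp fQ Zv)
        + (A ^ 2 + B ^ 2) * psComp (g 0) Zv) * hUZ + A * B * X * hG1
  -- conclude
  rw [Cab]
  refine cancelC hABXc ?_
  linear_combination (A * B * (A + B * X + A * X ^ 2)) * e4
    + X * (A + B * X + A * X ^ 2) * e2 + B * X * (A + A * X + B * X ^ 2) * e3
end
end

section
/- In the ring ℝ[[u,v]] of formal power series in two variables, the substituted bivariate generating function of the upper layer is rational: αβ·(1−uv)·(1−v³)·Σ_{N≥0} u^N·(f_N∘Z) = (uv³β + α + vβ)·(vα+β). -/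
open PowerSeries Filter

noncomputable section

namespace MyAux

variable {Z : PowerSeries ℝ}

lemma coeff_pow_eq_zero (hZ : constantCoeff Z = 0) {k n : ℕ} (h : n < k) :
    coeff n (Z ^ k) = 0 := by
  have hdvd : (X : PowerSeries ℝ) ^ k ∣ Z ^ k := pow_dvd_pow_of_dvd (X_dvd_iff.mpr hZ) k
  exact (X_pow_dvd_iff.mp hdvd) n h

lemma psComp_coeff (hZ : constantCoeff Z = 0) (h : PowerSeries ℝ) (n : ℕ) :
    coeff n (psComp h Z) = ∑ k ∈ Finset.range (n + 1), coeff k h * coeff n (Z ^ k) := by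
  rw [psComp, coeff_mk]
  refine tsum_eq_sum fun k hk => ?_
  rw [coeff_pow_eq_zero hZ (by simpa using Finset.mem_range.not.mp hk), mul_zero]

lemma psComp_add (hZ : constantCoeff Z = 0) (a b : PowerSeries ℝ) :
    psComp (a + b) Z = psComp a Z + psComp b Z := by
  ext n
  simp [psComp_coeff hZ, add_mul, Finset.sum_add_distrib]

lemma psComp_one (hZ : constantCoeff Z = 0) : psComp (1 : PowerSeries ℝ) Z = 1 := by
  ext n
  rw [psComp_coeff hZ]
  rw [Finset.sum_eq_single 0 (fun k _ hk => by simp [coeff_one, hk]) (by simp)]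
  simp [coeff_one]

lemma psComp_C_mul (hZ : constantCoeff Z = 0) (r : ℝ) (h : PowerSeries ℝ) :
    psComp (C r * h) Z = C r * psComp h Z := by
  ext n
  simp [psComp_coeff hZ, coeff_C_mul, Finset.mul_sum, mul_assoc]

lemma psComp_X_mul (hZ : constantCoeff Z = 0) (h : PowerSeries ℝ) :
    psComp (X * h) Z = Z * psComp h Z := by
  ext n
  rw [psComp_coeff hZ, coeff_mul]
  -- RHS: ∑_{p ∈ antidiagonal n} coeff p.1 Z * coeff p.2 (psComp h Z)
  have step1 : ∀ p ∈ Finset.HasAntidiagonal.antidiagonal n,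
      coeff p.1 Z * coeff p.2 (psComp h Z)
        = ∑ j ∈ Finset.range (n + 1), coeff j h * (coeff p.1 Z * coeff p.2 (Z ^ j)) := by
    intro p hp
    rw [psComp_coeff hZ]
    have hle : p.2 + 1 ≤ n + 1 := by
      have := Finset.HasAntidiagonal.antidiagonal.snd_le hp
      omega
    rw [Finset.mul_sum]
    refine (Finset.sum_subset (Finset.range_subset_range.mpr hle) fun j _ hj => ?_).trans
      (Finset.sum_congr rfl fun j _ => by ring)
    rw [coeff_pow_eq_zero hZ (by simpa using Finset.mem_range.not.mp hj)]
    ring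
  rw [Finset.sum_congr rfl step1, Finset.sum_comm]
  have step2 : ∀ j, ∑ p ∈ Finset.HasAntidiagonal.antidiagonal n,
      coeff j h * (coeff p.1 Z * coeff p.2 (Z ^ j))
        = coeff j h * coeff n (Z ^ (j + 1)) := by
    intro j
    rw [← Finset.mul_sum, pow_succ']
    rw [coeff_mul]
  rw [Finset.sum_congr rfl fun j _ => step2 j]
  -- LHS: ∑_{k ∈ range (n+1)} coeff k (X*h) * coeff n Z^k
  rw [Finset.sum_range_succ' (fun k => coeff k (X * h) * coeff n (Z ^ k)) n]
  rw [Finset.sum_range_succ (fun j => coeff j h * coeff n (Z ^ (j + 1))) n]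
  simp [coeff_succ_X_mul, coeff_pow_eq_zero hZ (Nat.lt_succ_self n)]


lemma kill (D : ℕ → PowerSeries ℝ) (hD : ∀ N, D N = X * D (N + 1)) : ∀ N, D N = 0 := by
  have key : ∀ k N, D N = X ^ k * D (N + k) := by
    intro k
    induction k with
    | zero => simp
    | succ k ih =>
      intro N
      rw [ih N, hD (N + k), ← mul_assoc, ← pow_succ, ← Nat.add_assoc]
  intro N
  ext m
  rw [key (m + 1) N, map_zero]
  exact (X_pow_dvd_iff.mp (Dvd.intro _ rfl)) m (Nat.lt_succ_self m)

lemma kernelShift (α β : ℝ) (hα : α ≠ 0) (hβ : β ≠ 0) (Z : PowerSeries ℝ)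
    (hker : Z * ((C α + C β * X) * (C β + C α * X)) = X)
    (H : ℕ → PowerSeries ℝ)
    (hH : ∀ N, H (N + 1) = C α * C β * Z * H N + C α * C β * Z * H (N + 2)
      + (C α ^ 2 + C β ^ 2) * Z * H (N + 1)) :
    ∀ N, H (N + 1) = X * H N := by
  have hZne : Z ≠ 0 := by
    intro h
    exact X_ne_zero (by rw [← hker, h, zero_mul])
  have hCα : (C α) ≠ 0 := fun h => hα (by simpa using congrArg (constantCoeff) h)
  have hCβ : (C β) ≠ 0 := fun h => hβ (by simpa using congrArg (constantCoeff) h)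
  have hc : C α * C β * Z ≠ 0 := mul_ne_zero (mul_ne_zero hCα hCβ) hZne
  have key : ∀ N, H (N + 1) - X * H N = X * (H (N + 2) - X * H (N + 1)) := by
    intro N
    refine mul_left_cancel₀ hc ?_
    linear_combination (X : PowerSeries ℝ) * hH N + H (N + 1) * hker
  have hzero := kill (fun N => H (N + 1) - X * H N) key
  intro N
  have := hzero N
  linear_combination this

lemma psComp_CX_mul {Z : PowerSeries ℝ} (hZ : constantCoeff Z = 0) (r : ℝ) (h : PowerSeries ℝ) :
    psComp (C r * X * h) Z = C r * Z * psComp h Z := by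
  rw [mul_assoc, psComp_C_mul hZ, psComp_X_mul hZ, mul_assoc]


end MyAux

open MyAux

/-- After the substitution, the bivariate generating function of the upper layer is
rational: `αβ(1-uv)(1-v³)·Σ u^N (f_N∘Z) = (uv³β+α+vβ)(vα+β)` in `ℝ[[u,v]]`. -/
theorem twoStep_F_substituted
    (α β : ℝ) (hα0 : 0 < α) (hα1 : α < 1) (hβ : β = 1 - α)
    (f g : ℕ → PowerSeries ℝ) (fQ : PowerSeries ℝ)
    (hf : ∀ N : ℕ, f (N + 2) =
      C (α * β) * X * f (N + 1) + C (α * β) * X * f (N + 3)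
        + C (α ^ 2 + β ^ 2) * X * f (N + 2))
    (hf1 : f 1 = C (α * β) * X * f 0 + C (α * β) * X * f 2
        + C (α ^ 2 + β ^ 2) * X * f 1 + C (β ^ 2) * X * fQ)
    (hf0 : f 0 = 1 + C (α * β) * X * f 1 + C (α ^ 2 + β ^ 2) * X * f 0
        + C (α * β) * X * fQ)
    (hfQ : fQ = C (α * β) * X * g 0 + C (α ^ 2) * X * fQ)
    (hg : ∀ N : ℕ, g (N + 1) = C (α * β) * X * g N + C (α * β) * X * g (N + 2)
        + C (α ^ 2 + β ^ 2) * X * g (N + 1))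
    (hg0 : g 0 = C (α * β) * X * f 0 + C (α * β) * X * g 1
        + C (α * β) * X * fQ + C (α ^ 2 + β ^ 2) * X * g 0)
    (hsupp : ∀ m N : ℕ, m < N → coeff m (f N) = 0 ∧ coeff m (g N) = 0) :
    CC (α * β) * (1 - U * Zv) * (1 - Zv ^ 3) * PowerSeries.mk (fun N => psComp (f N) (Zsub α β)) =
      (U * Zv ^ 3 * CC β + CC α + Zv * CC β) * (Zv * CC α + CC β) := by
  have hαne : α ≠ 0 := ne_of_gt hα0
  have hβ0 : (0:ℝ) < β := by rw [hβ]; linarith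
  have hβne : β ≠ 0 := ne_of_gt hβ0
  set Z : PowerSeries ℝ := Zsub α β with hZdef
  set W : PowerSeries ℝ := (C α + C β * X) * (C β + C α * X) with hWdef
  have hWconst : constantCoeff W = α * β := by simp [hWdef]
  have hker : Z * W = X := by
    rw [hZdef, Zsub, mul_assoc, ← hWdef, PowerSeries.inv_mul_cancel W (by rw [hWconst]; positivity),
      mul_one]
  have hZ0 : constantCoeff Z = 0 := by
    rw [hZdef, Zsub]; simp
  have hZne : Z ≠ 0 := fun h => X_ne_zero (by rw [← hker, h, zero_mul])
  have hCα : (C α) ≠ 0 := fun h => hαne (by simpa using congrArg (constantCoeff) h)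
  have hCβ : (C β) ≠ 0 := fun h => hβne (by simpa using congrArg (constantCoeff) h)
  set F : ℕ → PowerSeries ℝ := fun N => psComp (f N) Z with hFdef
  set G : ℕ → PowerSeries ℝ := fun N => psComp (g N) Z with hGdef
  set FQ : PowerSeries ℝ := psComp fQ Z with hFQdef
  -- composed hypotheses
  have Hf : ∀ N, F (N + 2) = C α * C β * Z * F (N + 1) + C α * C β * Z * F (N + 3)
      + (C α ^ 2 + C β ^ 2) * Z * F (N + 2) := by
    intro N
    have := congrArg (fun h => psComp h Z) (hf N)
    simp only [psComp_add hZ0, psComp_CX_mul hZ0] at this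
    simpa only [map_mul, map_add, map_pow, hFdef] using this
  have Hf1 : F 1 = C α * C β * Z * F 0 + C α * C β * Z * F 2
      + (C α ^ 2 + C β ^ 2) * Z * F 1 + C β ^ 2 * Z * FQ := by
    have := congrArg (fun h => psComp h Z) hf1
    simp only [psComp_add hZ0, psComp_CX_mul hZ0] at this
    simpa only [map_mul, map_add, map_pow, hFdef, hFQdef] using this
  have Hf0 : F 0 = 1 + C α * C β * Z * F 1 + (C α ^ 2 + C β ^ 2) * Z * F 0
      + C α * C β * Z * FQ := by
    have := congrArg (fun h => psComp h Z) hf0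
    simp only [psComp_add hZ0, psComp_CX_mul hZ0, psComp_one hZ0] at this
    simpa only [map_mul, map_add, map_pow, hFdef, hFQdef] using this
  have HfQ : FQ = C α * C β * Z * G 0 + C α ^ 2 * Z * FQ := by
    have := congrArg (fun h => psComp h Z) hfQ
    simp only [psComp_add hZ0, psComp_CX_mul hZ0] at this
    simpa only [map_mul, map_add, map_pow, hFQdef, hGdef] using this
  have Hg : ∀ N, G (N + 1) = C α * C β * Z * G N + C α * C β * Z * G (N + 2)
      + (C α ^ 2 + C β ^ 2) * Z * G (N + 1) := by
    intro N
    have := congrArg (fun h => psComp h Z) (hg N)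
    simp only [psComp_add hZ0, psComp_CX_mul hZ0] at this
    simpa only [map_mul, map_add, map_pow, hGdef] using this
  have Hg0 : G 0 = C α * C β * Z * F 0 + C α * C β * Z * G 1
      + C α * C β * Z * FQ + (C α ^ 2 + C β ^ 2) * Z * G 0 := by
    have := congrArg (fun h => psComp h Z) hg0
    simp only [psComp_add hZ0, psComp_CX_mul hZ0] at this
    simpa only [map_mul, map_add, map_pow, hFdef, hGdef, hFQdef] using this
  -- kernel method
  have shiftF : ∀ N, F (N + 2) = X * F (N + 1) :=
    kernelShift α β hαne hβne Z hker (fun N => F (N + 1)) (fun N => Hf N)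
  have shiftG : ∀ N, G (N + 1) = X * G N :=
    kernelShift α β hαne hβne Z hker G Hg
  have habZ : C α * C β * Z ≠ 0 := mul_ne_zero (mul_ne_zero hCα hCβ) hZne
  -- boundary equations
  have R3 : G 0 = X * (F 0 + FQ) := by
    refine mul_left_cancel₀ habZ ?_
    linear_combination (X : PowerSeries ℝ) * Hg0 + G 0 * hker + C α * C β * Z * X * shiftG 0
  have R4 : C β * (C α + C β * X) * FQ = C α * C β * X ^ 2 * F 0 := by
    linear_combination W * HfQ + (C α * C β * G 0 + C α ^ 2 * FQ) * hker
      + C α * C β * X * R3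
  have R5 : C α * C β * F 1 = C α * C β * X * F 0 + C β ^ 2 * X * FQ := by
    refine mul_left_cancel₀ hZne ?_
    linear_combination (X : PowerSeries ℝ) * Hf1 + F 1 * hker + C α * C β * Z * X * shiftF 0
  have R6 : C α * C β * (1 - X ^ 3) * F 0 = W := by
    have hfac : (C α + C β * X) ≠ 0 := fun h => hαne (by simpa using congrArg (constantCoeff) h)
    refine mul_left_cancel₀ hfac ?_
    linear_combination (C α + C β * X) * W * Hf0
      + (C α + C β * X) * (C α * C β * F 1 + (C α ^ 2 + C β ^ 2) * F 0
          + C α * C β * FQ) * hker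
      + (C α + C β * X) * X * R5 + (C α + C β * X) * X * R4
  have R7 : C α * C β * (1 - X ^ 3) * (F 1 - X * F 0)
      = X ^ 3 * C β * (X * C α + C β) := by
    have hfac : (C α + C β * X) ≠ 0 := fun h => hαne (by simpa using congrArg (constantCoeff) h)
    refine mul_left_cancel₀ hfac ?_
    linear_combination (1 - X ^ 3) * (C α + C β * X) * R5
      + C β * X * (1 - X ^ 3) * R4 + C β * X ^ 3 * R6
  -- assemble the bivariate identity
  set A : PowerSeries ℝ := C α * C β * (1 - X ^ 3) with hAdef
  have hLHS : CC (α * β) * (1 - U * Zv) * (1 - Zv ^ 3)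
      = C A - C (A * X) * X := by
    simp only [U, Zv, CC, hAdef, map_mul, map_sub, map_add, map_pow, map_one]
    ring
  have hRHS : (U * Zv ^ 3 * CC β + CC α + Zv * CC β) * (Zv * CC α + CC β)
      = C ((C α + X * C β) * (X * C α + C β))
        + C (X ^ 3 * C β * (X * C α + C β)) * X := by
    simp only [U, Zv, CC, map_mul, map_add, map_pow]
    ring
  rw [hLHS, hRHS]
  have expand : (C A - C (A * X) * X) * PowerSeries.mk F
      = C A * PowerSeries.mk F
        - C (A * X) * (X * PowerSeries.mk F) := by ring
  rw [expand]
  ext N : 1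
  rw [map_sub, map_add, coeff_C_mul, coeff_C_mul, coeff_C_mul]
  rcases N with _ | _ | n
  · simp only [coeff_zero_eq_constantCoeff, map_mul, constantCoeff_X, mul_zero, sub_zero,
      constantCoeff_mk, constantCoeff_C, coeff_zero_C]
    linear_combination R6
  · rw [coeff_succ_X_mul, coeff_mk, coeff_mk, PowerSeries.coeff_C, PowerSeries.coeff_X]
    simp only [one_ne_zero, if_false, if_true, mul_one, zero_add]
    linear_combination R7
  · rw [coeff_succ_X_mul, coeff_mk, coeff_mk, PowerSeries.coeff_C, PowerSeries.coeff_X]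
    rw [if_neg (by omega), if_neg (by omega), mul_zero, zero_add]
    show A * F (n + 2) - A * X * F (n + 1) = 0
    linear_combination A * shiftF n
end
end

section
/- There exists a unique formal power series V ∈ ℝ[[z]] with zero constant term satisfying V = z·(α+βV)·(β+αV), and for every H ∈ ℝ[[v]] and every integer N ≥ 1, the coefficient of z^N in the composition H∘V equals the coefficient of v^N in αβ·(1−v²)·(α+βv)^{N−1}·(β+αv)^{N−1}·H(v). -/
open PowerSeries Filter

noncomputable section

namespace LagrangeAux

/-- Recursively defined coefficients of the solution `V`. -/
def vc (α β : ℝ) : ℕ → ℝ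
  | 0 => 0
  | 1 => α * β
  | (n+2) => (α^2 + β^2) * vc α β (n+1)
      + α * β * ∑ i ∈ (Finset.range (n+2)).attach, vc α β i.1 * vc α β (n+1 - i.1)
  decreasing_by
  · omega
  · have := Finset.mem_range.mp i.2; omega
  · omega

variable (α β : ℝ)

lemma rhs_eq (W : PowerSeries ℝ) :
    (C α + C β * W) * (C β + C α * W)
      = C (α*β) + C (α^2 + β^2) * W + C (α*β) * (W*W) := by
  simp only [map_mul, map_add, map_pow]
  ring

lemma coeff_zero_rhs (W : PowerSeries ℝ) :
    coeff 0 (X * (C α + C β * W) * (C β + C α * W)) = 0 := by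
  rw [mul_assoc]
  simp [coeff_zero_eq_constantCoeff, map_mul]

lemma coeff_succ_rhs (W : PowerSeries ℝ) (n : ℕ) :
    coeff (n+1) (X * (C α + C β * W) * (C β + C α * W))
      = (if n = 0 then α*β else 0) + (α^2 + β^2) * coeff n W
        + α*β * ∑ i ∈ Finset.range (n+1), coeff i W * coeff (n-i) W := by
  rw [mul_assoc, coeff_succ_X_mul, rhs_eq, map_add, map_add, coeff_C, coeff_C_mul,
    coeff_C_mul, coeff_mul, Finset.Nat.sum_antidiagonal_eq_sum_range_succ_mk]

/-- The candidate solution. -/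
def Vs : PowerSeries ℝ := PowerSeries.mk (vc α β)

lemma constantCoeff_Vs : constantCoeff (Vs α β) = 0 := by
  rw [← coeff_zero_eq_constantCoeff]
  simp [Vs, vc]

lemma vc_rec (n : ℕ) :
    vc α β (n+1) = (if n = 0 then α*β else 0) + (α^2 + β^2) * vc α β n
      + α*β * ∑ i ∈ Finset.range (n+1), vc α β i * vc α β (n-i) := by
  cases n with
  | zero => simp [vc]
  | succ m =>
      rw [show m + 1 + 1 = m + 2 from rfl, vc, Finset.sum_attach _ (fun i => vc α β i * vc α β (m+1-i))]
      simp

lemma Vs_sol : Vs α β = X * (C α + C β * Vs α β) * (C β + C α * Vs α β) := by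
  ext n
  cases n with
  | zero => rw [coeff_zero_rhs]; simp [Vs, vc]
  | succ m =>
      rw [coeff_succ_rhs]
      simp only [Vs, coeff_mk]
      exact vc_rec α β m

lemma sol_coeff (W : PowerSeries ℝ) (h0 : constantCoeff W = 0)
    (heq : W = X * (C α + C β * W) * (C β + C α * W)) :
    ∀ n, coeff n W = vc α β n := by
  intro n
  induction n using Nat.strong_induction_on with
  | _ n ih =>
    cases n with
    | zero => rw [coeff_zero_eq_constantCoeff, h0]; simp [vc]
    | succ m =>
        conv_lhs => rw [heq]
        rw [coeff_succ_rhs, vc_rec, ih m (by omega)]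
        congr 1
        refine congrArg _ (Finset.sum_congr rfl fun i hi => ?_)
        have hi' := Finset.mem_range.mp hi
        rw [ih i (by omega), ih (m - i) (by omega)]

lemma sol_eq (W : PowerSeries ℝ) (h0 : constantCoeff W = 0)
    (heq : W = X * (C α + C β * W) * (C β + C α * W)) :
    W = Vs α β := by
  ext n
  rw [sol_coeff α β W h0 heq n]
  simp [Vs]

/-! ### The Lagrange inversion part -/

/-- `ψ = αβ(1 - v²)`. -/
def psi : PowerSeries ℝ := C (α*β) * (1 - X^2)

/-- `φ = (α+βv)(β+αv)`. -/
def phi : PowerSeries ℝ := (C α + C β * X) * (C β + C α * X)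

/-- The polynomial version of `φ`. -/
def pphi : Polynomial ℝ :=
  (Polynomial.C α + Polynomial.C β * Polynomial.X) *
    (Polynomial.C β + Polynomial.C α * Polynomial.X)

lemma aeval_pphi (W : PowerSeries ℝ) :
    Polynomial.aeval W (pphi α β) = (C α + C β * W) * (C β + C α * W) := by
  simp [pphi, ← C_eq_algebraMap]

lemma psi_eq : psi α β = phi α β - X * (PowerSeries.derivative ℝ (phi α β)) := by
  simp only [phi, psi, Derivation.leibniz, map_add, derivative_X, derivative_C,
    smul_eq_mul, smul_zero, mul_one, add_zero, mul_zero, map_mul]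
  ring

lemma constantCoeff_psi : constantCoeff (psi α β) = α * β := by
  simp [psi]

lemma constantCoeff_phi : constantCoeff (phi α β) = α * β := by
  simp [phi]

lemma coeff_psi_phi (N : ℕ) (hN : 1 ≤ N) : coeff N (psi α β * phi α β ^ (N-1)) = 0 := by
  obtain ⟨M, rfl⟩ : ∃ M, N = M + 1 := ⟨N - 1, by omega⟩
  have h1 : (M + 1 - 1) = M := by omega
  rw [h1]
  have key : ((M:ℝ) + 1) * coeff (M+1) (psi α β * phi α β ^ M) = 0 := by
    have e1 : psi α β * phi α β ^ M
        = phi α β ^ (M+1) - X * (PowerSeries.derivative ℝ (phi α β) * phi α β ^ M) := by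
      rw [psi_eq]; ring
    have e2 : PowerSeries.derivative ℝ (phi α β ^ (M+1))
        = (M+1) • (phi α β ^ M * PowerSeries.derivative ℝ (phi α β)) := by
      rw [Derivation.leibniz_pow, Nat.add_sub_cancel, smul_eq_mul]
    have e3 : coeff M (PowerSeries.derivative ℝ (phi α β ^ (M+1)))
        = coeff (M+1) (phi α β ^ (M+1)) * (M+1) := coeff_derivative _ _
    rw [e2] at e3
    have e4 : coeff M ((M+1) • (phi α β ^ M * PowerSeries.derivative ℝ (phi α β)))
        = ((M:ℝ)+1) * coeff M (phi α β ^ M * PowerSeries.derivative ℝ (phi α β)) := by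
      rw [map_nsmul, nsmul_eq_mul]
      push_cast
      ring
    rw [e4] at e3
    rw [e1, map_sub, coeff_succ_X_mul, mul_sub]
    rw [show PowerSeries.derivative ℝ (phi α β) * phi α β ^ M
        = phi α β ^ M * PowerSeries.derivative ℝ (phi α β) from mul_comm _ _]
    rw [e3]
    ring
  have hM : ((M:ℝ) + 1) ≠ 0 := by positivity
  exact (mul_eq_zero.mp key).resolve_left hM

lemma coeff_pow_zero_of_lt (V : PowerSeries ℝ) (h0 : constantCoeff V = 0)
    {N k : ℕ} (h : N < k) : coeff N (V ^ k) = 0 := by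
  have hd : (X : PowerSeries ℝ) ^ k ∣ V ^ k :=
    pow_dvd_pow_of_dvd (X_dvd_iff.mpr h0) k
  exact X_pow_dvd_iff.mp hd N h

lemma key_lemma (V : PowerSeries ℝ) (h0 : constantCoeff V = 0)
    (heq : V = X * (C α + C β * V) * (C β + C α * V)) :
    ∀ N, 1 ≤ N → ∀ k, coeff N (V ^ k) = coeff N (X ^ k * (psi α β * phi α β ^ (N-1))) := by
  intro N
  induction N using Nat.strong_induction_on with
  | _ N ih =>
    intro hN k
    rcases Nat.eq_zero_or_pos k with hk0 | hk1
    · subst hk0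
      rw [pow_zero, pow_zero, one_mul, coeff_one, if_neg (by omega), coeff_psi_phi α β N hN]
    rcases lt_or_ge N k with hlt | hle
    · rw [coeff_pow_zero_of_lt V h0 hlt, coeff_X_pow_mul', if_neg (by omega)]
    -- now 1 ≤ k ≤ N
    have hVk : V ^ k = X ^ k * Polynomial.aeval V (pphi α β ^ k) := by
      conv_lhs => rw [heq]
      rw [map_pow, aeval_pphi, mul_assoc, mul_pow]
    rw [hVk, coeff_X_pow_mul', if_pos hle, coeff_X_pow_mul', if_pos hle]
    rcases Nat.lt_or_ge (N - k) 1 with hNk | hNk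
    · -- k = N
      have hkN : k = N := by omega
      have h1 : N - k = 0 := by omega
      rw [h1, coeff_zero_eq_constantCoeff]
      have hL : constantCoeff ((Polynomial.aeval V) (pphi α β ^ k)) = (α*β)^k := by
        rw [map_pow, map_pow, aeval_pphi]
        simp [h0]
      have hR : constantCoeff (psi α β * phi α β ^ (N-1)) = α*β * (α*β)^(N-1) := by
        rw [map_mul, map_pow, constantCoeff_psi, constantCoeff_phi]
      have hstep : α*β*(α*β)^(N-1) = (α*β)^N := by
        rw [← pow_succ']
        congr 1
        omega
      rw [hL, hR, hkN, hstep]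
    · -- 1 ≤ N - k < N : use the inductive hypothesis
      have hNkN : N - k < N := by omega
      set q : Polynomial ℝ := pphi α β ^ k with hq
      rw [Polynomial.aeval_eq_sum_range (R := ℝ) (x := V) (p := q)]
      rw [map_sum]
      have step : ∀ i ∈ Finset.range (q.natDegree + 1),
          coeff (N-k) (q.coeff i • V ^ i)
            = q.coeff i * coeff (N-k) (X ^ i * (psi α β * phi α β ^ (N-k-1))) := by
        intro i _
        rw [coeff_smul, smul_eq_mul, ih (N-k) hNkN hNk i]
      rw [Finset.sum_congr rfl step]
      have collect : ∑ i ∈ Finset.range (q.natDegree + 1),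
          q.coeff i * coeff (N-k) (X ^ i * (psi α β * phi α β ^ (N-k-1)))
            = coeff (N-k) ((∑ i ∈ Finset.range (q.natDegree + 1), q.coeff i • (X:PowerSeries ℝ) ^ i)
                * (psi α β * phi α β ^ (N-k-1))) := by
        rw [Finset.sum_mul, map_sum]
        refine Finset.sum_congr rfl fun i _ => ?_
        rw [smul_mul_assoc, coeff_smul, smul_eq_mul]
      rw [collect]
      have haev : (∑ i ∈ Finset.range (q.natDegree + 1), q.coeff i • (X:PowerSeries ℝ) ^ i)
          = Polynomial.aeval (X : PowerSeries ℝ) q :=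
        (Polynomial.aeval_eq_sum_range (R := ℝ) (x := (X:PowerSeries ℝ)) (p := q)).symm
      rw [haev, hq, map_pow, aeval_pphi]
      rw [show (C α + C β * X) * (C β + C α * X) = phi α β from rfl]
      have hexp : phi α β ^ k * (psi α β * phi α β ^ (N-k-1))
          = psi α β * phi α β ^ (N-1) := by
        have hpp : phi α β ^ k * phi α β ^ (N-k-1) = phi α β ^ (N-1) := by
          rw [← pow_add]
          congr 1
          omega
        rw [mul_left_comm, hpp]
      rw [hexp]

end LagrangeAux

open LagrangeAux in
/-- There is a unique power series `V` with zero constant term satisfying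
`V = z(α+βV)(β+αV)`, and extraction of coefficients after substituting `V`
is given by the Cauchy-integral (Lagrange-type) formula. -/
theorem inverse_substitution_coeff_formula (α β : ℝ) (hα0 : 0 < α) (hα1 : α < 1)
    (hβ : β = 1 - α) :
    (∃! V : PowerSeries ℝ, constantCoeff V = 0 ∧
      V = X * (C α + C β * V) * (C β + C α * V)) ∧
    (∀ V : PowerSeries ℝ, constantCoeff V = 0 →
      V = X * (C α + C β * V) * (C β + C α * V) →
      ∀ H : PowerSeries ℝ, ∀ N : ℕ, 1 ≤ N →
        coeff N (psComp H V) =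
          coeff N (C (α * β) * (1 - X ^ 2) * (C α + C β * X) ^ (N - 1)
            * (C β + C α * X) ^ (N - 1) * H)) := by
  constructor
  · exact ⟨Vs α β, ⟨constantCoeff_Vs α β, Vs_sol α β⟩,
      fun W hW => sol_eq α β W hW.1 hW.2⟩
  · intro V h0 heq H N hN
    -- LHS: the tsum reduces to a finite sum
    have lhs_eq : coeff N (psComp H V)
        = ∑ k ∈ Finset.range (N+1), coeff k H * coeff N (V ^ k) := by
      rw [psComp, coeff_mk]
      refine tsum_eq_sum fun k hk => ?_
      have hk' : N < k := by
        by_contra h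
        exact hk (Finset.mem_range.mpr (by omega))
      rw [coeff_pow_zero_of_lt V h0 hk', mul_zero]
    -- RHS: rewrite the series as `H * (psi * phi^(N-1))`
    have rhs_series : C (α * β) * (1 - X ^ 2) * (C α + C β * X) ^ (N - 1)
        * (C β + C α * X) ^ (N - 1) * H
          = H * (psi α β * phi α β ^ (N-1)) := by
      rw [psi, phi, mul_pow]
      ring
    have rhs_eq : coeff N (C (α * β) * (1 - X ^ 2) * (C α + C β * X) ^ (N - 1)
        * (C β + C α * X) ^ (N - 1) * H)
          = ∑ k ∈ Finset.range (N+1), coeff k H * coeff (N-k) (psi α β * phi α β ^ (N-1)) := by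
      rw [rhs_series, coeff_mul, Finset.Nat.sum_antidiagonal_eq_sum_range_succ_mk]
    rw [lhs_eq, rhs_eq]
    refine Finset.sum_congr rfl fun k hk => ?_
    congr 1
    rw [key_lemma α β V h0 heq N hN k, coeff_X_pow_mul', if_pos (Nat.lt_succ_iff.mp (Finset.mem_range.mp hk))]

end
end

section
/- In the symmetric case α = 1/2 (so β = 1/2), for every real z with 0 < z < 1 the series Σ_{n≥0} ([z^n]E)·z^n converges and its sum equals (z − 1 + (1+z)·√(1−z)) / (2·(1−z)²), where [z^n]E denotes the n-th coefficient of E. -/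
open PowerSeries Filter

noncomputable section

/-- The expected-end generating function `E = Σ_k 2k·f_k + Σ_k (2k+1)·g_k`; for each `n`
the support condition makes the series of `n`-th coefficients a finite sum. -/
def expectedEnd (f g : ℕ → PowerSeries ℝ) : PowerSeries ℝ :=
  PowerSeries.mk fun n =>
    ∑' k : ℕ, ((2 * k : ℝ) * PowerSeries.coeff n (f k)
      + (2 * (k : ℝ) + 1) * PowerSeries.coeff n (g k))

private lemma coeffCXmul (c : ℝ) (h : PowerSeries ℝ) (m : ℕ) :
    coeff (m + 1) (C c * X * h) = c * coeff m h := by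
  rw [mul_assoc, coeff_C_mul, coeff_succ_X_mul]

private lemma coeffCXmul0 (c : ℝ) (h : PowerSeries ℝ) :
    coeff 0 (C c * X * h) = 0 := by
  rw [mul_assoc, coeff_C_mul, coeff_zero_eq_constantCoeff, map_mul, constantCoeff_X,
    zero_mul, mul_zero]

private lemma ratio_of_bounded {lam mu B : ℝ} (hmu : 1 < mu) (hlm : lam * mu = 1)
    (u : ℕ → ℝ) (hB : ∀ k, |u k| ≤ B)
    (hrec : ∀ k, u (k + 2) = (lam + mu) * u (k + 1) - u k) :
    ∀ k, u (k + 1) = lam * u k := by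
  have hvrec : ∀ k, u (k + 2) - lam * u (k + 1) = mu * (u (k + 1) - lam * u k) := by
    intro k; linear_combination hrec k + u k * hlm
  have hvpow : ∀ k, u (k + 1) - lam * u k = mu ^ k * (u 1 - lam * u 0) := by
    intro k; induction k with
    | zero => simp
    | succ n ih =>
      have h1 : u (n + 1 + 1) - lam * u (n + 1) = mu * (u (n + 1) - lam * u n) := hvrec n
      rw [h1, ih, pow_succ]; ring
  have hv0 : u 1 - lam * u 0 = 0 := by
    by_contra hne
    have hpos : 0 < |u 1 - lam * u 0| := abs_pos.mpr (sub_ne_zero.mpr ?hne0)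
    case hne0 => intro h; exact hne (by linarith [sub_eq_zero.mpr h])
    have hbound : ∀ k, mu ^ k ≤ (B + |lam| * B) / |u 1 - lam * u 0| := by
      intro k
      have hBnn : 0 ≤ B := le_trans (abs_nonneg _) (hB 0)
      have h1 : |u (k + 1) - lam * u k| ≤ B + |lam| * B := by
        calc |u (k + 1) - lam * u k| ≤ |u (k + 1)| + |lam * u k| := abs_sub _ _
          _ ≤ B + |lam| * B := by
            have := hB (k + 1); have h2 := hB k
            have h3 : |lam * u k| = |lam| * |u k| := abs_mul _ _
            have h4 : |lam| * |u k| ≤ |lam| * B :=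
              mul_le_mul_of_nonneg_left h2 (abs_nonneg _)
            linarith
      have h2 : mu ^ k * |u 1 - lam * u 0| ≤ B + |lam| * B := by
        have h3 : |u (k + 1) - lam * u k| = mu ^ k * |u 1 - lam * u 0| := by
          rw [hvpow k, abs_mul, abs_of_nonneg (pow_nonneg (by linarith) k)]
        linarith [h3 ▸ h1]
      exact (le_div_iff₀ hpos).mpr h2
    obtain ⟨k, hk⟩ :=
      ((tendsto_pow_atTop_atTop_of_one_lt hmu).eventually_gt_atTop
        ((B + |lam| * B) / |u 1 - lam * u 0|)).exists
    exact absurd (hbound k) (not_le.mpr hk)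
  intro k
  have h := hvpow k
  rw [hv0, mul_zero] at h
  linarith

private lemma tsum_shift4 {z c0 p1 p2 p3 p4 : ℝ} {a b1 b2 b3 b4 : ℕ → ℝ}
    (ha : Summable fun m => a m * z ^ m)
    (h1 : Summable fun m => b1 m * z ^ m) (h2 : Summable fun m => b2 m * z ^ m)
    (h3 : Summable fun m => b3 m * z ^ m) (h4 : Summable fun m => b4 m * z ^ m)
    (h0 : a 0 = c0)
    (hrec : ∀ m, a (m + 1) = p1 * b1 m + p2 * b2 m + p3 * b3 m + p4 * b4 m) :
    (∑' m, a m * z ^ m) = c0 + z * (p1 * ∑' m, b1 m * z ^ m)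
      + z * (p2 * ∑' m, b2 m * z ^ m) + z * (p3 * ∑' m, b3 m * z ^ m)
      + z * (p4 * ∑' m, b4 m * z ^ m) := by
  have key : ∀ m : ℕ, a (m + 1) * z ^ (m + 1)
      = z * p1 * (b1 m * z ^ m) + z * p2 * (b2 m * z ^ m)
        + z * p3 * (b3 m * z ^ m) + z * p4 * (b4 m * z ^ m) := by
    intro m; rw [hrec m, pow_succ]; ring
  have H := (((h1.hasSum.mul_left (z * p1)).add (h2.hasSum.mul_left (z * p2))).add
      (h3.hasSum.mul_left (z * p3))).add (h4.hasSum.mul_left (z * p4))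
  rw [Summable.tsum_eq_zero_add ha, tsum_congr key, H.tsum_eq, h0, pow_zero, mul_one]
  ring

private lemma tsum_shifts {c : ℕ → ℝ} (hc : Summable c) :
    ((∑' N, c (N + 1)) = (∑' N, c N) - c 0) ∧
    ((∑' N, c (N + 2)) = (∑' N, c N) - c 0 - c 1) ∧
    ((∑' N, c (N + 3)) = (∑' N, c N) - c 0 - c 1 - c 2) := by
  have h1s : Summable fun N => c (N + 1) := (summable_nat_add_iff 1).mpr hc
  have h2s : Summable fun N => c (N + 2) := (summable_nat_add_iff 2).mpr hc
  have e0 := Summable.tsum_eq_zero_add hc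
  have e1 := Summable.tsum_eq_zero_add h1s
  have e2 := Summable.tsum_eq_zero_add h2s
  have r1 : (fun N => c (N + 1 + 1)) = fun N => c (N + 2) := rfl
  have r2 : (fun N => c (N + 2 + 1)) = fun N => c (N + 3) := rfl
  rw [r1] at e1
  rw [r2] at e2
  refine ⟨by linarith, by linarith, by linarith⟩

set_option maxHeartbeats 1600000 in
/-- In the symmetric case `α = 1/2`, the expected-end generating function evaluates,
for `0 < z < 1`, to `(z - 1 + (1+z)√(1-z)) / (2(1-z)²)`. -/
theorem expectedEnd_eval_symmetric
    (α β : ℝ) (hα0 : 0 < α) (hα1 : α < 1) (hβ : β = 1 - α)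
    (f g : ℕ → PowerSeries ℝ) (fQ : PowerSeries ℝ)
    (hf : ∀ N : ℕ, f (N + 2) =
      C (α * β) * X * f (N + 1) + C (α * β) * X * f (N + 3)
        + C (α ^ 2 + β ^ 2) * X * f (N + 2))
    (hf1 : f 1 = C (α * β) * X * f 0 + C (α * β) * X * f 2
        + C (α ^ 2 + β ^ 2) * X * f 1 + C (β ^ 2) * X * fQ)
    (hf0 : f 0 = 1 + C (α * β) * X * f 1 + C (α ^ 2 + β ^ 2) * X * f 0
        + C (α * β) * X * fQ)
    (hfQ : fQ = C (α * β) * X * g 0 + C (α ^ 2) * X * fQ)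
    (hg : ∀ N : ℕ, g (N + 1) = C (α * β) * X * g N + C (α * β) * X * g (N + 2)
        + C (α ^ 2 + β ^ 2) * X * g (N + 1))
    (hg0 : g 0 = C (α * β) * X * f 0 + C (α * β) * X * g 1
        + C (α * β) * X * fQ + C (α ^ 2 + β ^ 2) * X * g 0)
    (hsupp : ∀ m N : ℕ, m < N → coeff m (f N) = 0 ∧ coeff m (g N) = 0) (hhalf : α = 1 / 2) :
    ∀ z : ℝ, 0 < z → z < 1 →
      HasSum (fun n : ℕ => coeff n (expectedEnd f g) * z ^ n)
        ((z - 1 + (1 + z) * Real.sqrt (1 - z)) / (2 * (1 - z) ^ 2)) := by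
  -- normalize the constants
  have e1 : α * β = 1 / 4 := by rw [hhalf, hβ, hhalf]; norm_num
  have e2 : α ^ 2 + β ^ 2 = 1 / 2 := by rw [hhalf, hβ, hhalf]; norm_num
  have e3 : β ^ 2 = 1 / 4 := by rw [hβ, hhalf]; norm_num
  have e4 : α ^ 2 = 1 / 4 := by rw [hhalf]; norm_num
  rw [e1, e2] at hf hf0 hg hg0
  rw [e1, e2, e3] at hf1
  rw [e1, e4] at hfQ
  -- coefficient recurrences
  have rF : ∀ m N, coeff (m + 1) (f (N + 2))
      = 1 / 4 * coeff m (f (N + 1)) + 1 / 4 * coeff m (f (N + 3))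
        + 1 / 2 * coeff m (f (N + 2)) := by
    intro m N
    have h := congrArg (coeff (m + 1)) (hf N)
    simpa [map_add, coeffCXmul] using h
  have rF1 : ∀ m, coeff (m + 1) (f 1)
      = 1 / 4 * coeff m (f 0) + 1 / 4 * coeff m (f 2)
        + 1 / 2 * coeff m (f 1) + 1 / 4 * coeff m fQ := by
    intro m
    have h := congrArg (coeff (m + 1)) hf1
    simpa [map_add, coeffCXmul] using h
  have rF0 : ∀ m, coeff (m + 1) (f 0)
      = 1 / 4 * coeff m (f 1) + 1 / 2 * coeff m (f 0) + 1 / 4 * coeff m fQ := by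
    intro m
    have h := congrArg (coeff (m + 1)) hf0
    simpa [map_add, coeffCXmul, coeff_one] using h
  have rQ : ∀ m, coeff (m + 1) fQ
      = 1 / 4 * coeff m (g 0) + 1 / 4 * coeff m fQ := by
    intro m
    have h := congrArg (coeff (m + 1)) hfQ
    simpa [map_add, coeffCXmul] using h
  have rG : ∀ m N, coeff (m + 1) (g (N + 1))
      = 1 / 4 * coeff m (g N) + 1 / 4 * coeff m (g (N + 2))
        + 1 / 2 * coeff m (g (N + 1)) := by
    intro m N
    have h := congrArg (coeff (m + 1)) (hg N)
    simpa [map_add, coeffCXmul] using h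
  have rG0 : ∀ m, coeff (m + 1) (g 0)
      = 1 / 4 * coeff m (f 0) + 1 / 4 * coeff m (g 1)
        + 1 / 4 * coeff m fQ + 1 / 2 * coeff m (g 0) := by
    intro m
    have h := congrArg (coeff (m + 1)) hg0
    simpa [map_add, coeffCXmul] using h
  -- base values at m = 0
  have hF00 : coeff 0 (f 0) = 1 := by
    have h := congrArg (coeff 0) hf0
    simpa [map_add, coeffCXmul0] using h
  have hQ0 : coeff 0 fQ = 0 := by
    have h := congrArg (coeff 0) hfQ
    simpa [map_add, coeffCXmul0] using h
  have hG00 : coeff 0 (g 0) = 0 := by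
    have h := congrArg (coeff 0) hg0
    simpa [map_add, coeffCXmul0] using h
  -- nonnegativity of all coefficients
  have hnonneg : ∀ m, (∀ N, 0 ≤ coeff m (f N)) ∧ (∀ N, 0 ≤ coeff m (g N))
      ∧ 0 ≤ coeff m fQ := by
    intro m
    induction m with
    | zero =>
      refine ⟨fun N => ?_, fun N => ?_, by rw [hQ0]⟩
      · match N with
        | 0 => rw [hF00]; norm_num
        | N + 1 => rw [(hsupp 0 (N + 1) (Nat.succ_pos N)).1]
      · match N with
        | 0 => rw [hG00]
        | N + 1 => rw [(hsupp 0 (N + 1) (Nat.succ_pos N)).2]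
    | succ m ih =>
      obtain ⟨ihF, ihG, ihQ⟩ := ih
      refine ⟨fun N => ?_, fun N => ?_, ?_⟩
      · match N with
        | 0 => rw [rF0 m]; linarith [ihF 0, ihF 1]
        | 1 => rw [rF1 m]; linarith [ihF 0, ihF 1, ihF 2]
        | (N + 2) => rw [rF m N]; linarith [ihF (N + 1), ihF (N + 2), ihF (N + 3)]
      · match N with
        | 0 => rw [rG0 m]; linarith [ihF 0, ihG 0, ihG 1]
        | (N + 1) => rw [rG m N]; linarith [ihG N, ihG (N + 1), ihG (N + 2)]
      · rw [rQ m]; linarith [ihG 0]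
  -- summability over N (finite support)
  have sumFN : ∀ m, Summable (fun N => coeff m (f N)) := by
    intro m
    apply summable_of_ne_finset_zero (s := Finset.range (m + 1))
    intro N hN
    simp only [Finset.mem_range] at hN
    exact (hsupp m N (by omega)).1
  have sumGN : ∀ m, Summable (fun N => coeff m (g N)) := by
    intro m
    apply summable_of_ne_finset_zero (s := Finset.range (m + 1))
    intro N hN
    simp only [Finset.mem_range] at hN
    exact (hsupp m N (by omega)).2
  -- the mass identity
  have mass : ∀ m, coeff m fQ + (∑' N, coeff m (f N)) + (∑' N, coeff m (g N)) = 1 := by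
    intro m
    induction m with
    | zero =>
      have htf : (∑' N, coeff 0 (f N)) = 1 := by
        rw [tsum_eq_single 0 (fun N hN => ?_), hF00]
        match N, hN with
        | N + 1, _ => exact (hsupp 0 (N + 1) (Nat.succ_pos N)).1
      have htg : (∑' N, coeff 0 (g N)) = 0 := by
        have hz : ∀ N, coeff 0 (g N) = 0 := by
          intro N
          match N with
          | 0 => exact hG00
          | N + 1 => exact (hsupp 0 (N + 1) (Nat.succ_pos N)).2
        rw [tsum_congr hz, tsum_zero]
      rw [hQ0, htf, htg]; norm_num
    | succ m ih =>
      obtain ⟨f1s, f2s, f3s⟩ := tsum_shifts (sumFN m)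
      obtain ⟨g1s, g2s, g3s⟩ := tsum_shifts (sumGN m)
      have hFsum : (∑' N, coeff (m + 1) (f N))
          = (∑' N, coeff m (f N)) - 1 / 4 * coeff m (f 0) + 1 / 2 * coeff m fQ := by
        have h0 := Summable.tsum_eq_zero_add (sumFN (m + 1))
        have h1 := Summable.tsum_eq_zero_add ((summable_nat_add_iff 1).mpr (sumFN (m + 1)))
        have hcong : (fun b : ℕ => coeff (m + 1) (f (b + 1 + 1)))
            = fun b => 1 / 4 * coeff m (f (b + 1)) + 1 / 4 * coeff m (f (b + 3))
              + 1 / 2 * coeff m (f (b + 2)) := by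
          funext b; exact rF m b
        rw [hcong] at h1
        have hS := ((((summable_nat_add_iff 1).mpr (sumFN m)).hasSum.mul_left (1 / 4)).add
            (((summable_nat_add_iff 3).mpr (sumFN m)).hasSum.mul_left (1 / 4))).add
            (((summable_nat_add_iff 2).mpr (sumFN m)).hasSum.mul_left (1 / 2))
        rw [hS.tsum_eq] at h1
        rw [h1, rF0 m, rF1 m] at h0
        rw [h0, f1s, f2s, f3s]
        ring
      have hGsum : (∑' N, coeff (m + 1) (g N))
          = (∑' N, coeff m (g N)) + 1 / 4 * coeff m (f 0) - 1 / 4 * coeff m (g 0)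
            + 1 / 4 * coeff m fQ := by
        have h0 := Summable.tsum_eq_zero_add (sumGN (m + 1))
        have hcong : (fun b : ℕ => coeff (m + 1) (g (b + 1)))
            = fun b => 1 / 4 * coeff m (g b) + 1 / 4 * coeff m (g (b + 2))
              + 1 / 2 * coeff m (g (b + 1)) := by
          funext b; exact rG m b
        rw [hcong] at h0
        have hS := (((sumGN m).hasSum.mul_left (1 / 4)).add
            (((summable_nat_add_iff 2).mpr (sumGN m)).hasSum.mul_left (1 / 4))).add
            (((summable_nat_add_iff 1).mpr (sumGN m)).hasSum.mul_left (1 / 2))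
        rw [hS.tsum_eq] at h0
        rw [h0, rG0 m]
        rw [g1s, g2s]
        ring
      rw [hFsum, hGsum, rQ m]
      linarith
  -- coefficient bounds
  have hFle1 : ∀ m N, coeff m (f N) ≤ 1 := by
    intro m N
    have h := Summable.le_tsum (sumFN m) N (fun N' _ => (hnonneg m).1 N')
    have h2 : 0 ≤ ∑' N', coeff m (g N') := tsum_nonneg (fun N' => (hnonneg m).2.1 N')
    have h3 := (hnonneg m).2.2
    linarith [mass m]
  have hGle1 : ∀ m N, coeff m (g N) ≤ 1 := by
    intro m N
    have h := Summable.le_tsum (sumGN m) N (fun N' _ => (hnonneg m).2.1 N')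
    have h2 : 0 ≤ ∑' N', coeff m (f N') := tsum_nonneg (fun N' => (hnonneg m).1 N')
    have h3 := (hnonneg m).2.2
    linarith [mass m]
  have hQle1 : ∀ m, coeff m fQ ≤ 1 := by
    intro m
    have h2 : 0 ≤ ∑' N', coeff m (f N') := tsum_nonneg (fun N' => (hnonneg m).1 N')
    have h3 : 0 ≤ ∑' N', coeff m (g N') := tsum_nonneg (fun N' => (hnonneg m).2.1 N')
    linarith [mass m]
  -- now fix z
  intro z hz0 hz1
  have hzge : (0:ℝ) ≤ z := hz0.le
  have hzne : z ≠ 0 := ne_of_gt hz0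
  have geom : Summable fun m : ℕ => z ^ m := summable_geometric_of_lt_one hzge hz1
  have sumz : ∀ (c : ℕ → ℝ), (∀ m, 0 ≤ c m) → (∀ m, c m ≤ 1) →
      Summable (fun m => c m * z ^ m) := by
    intro c h0 h1
    refine Summable.of_nonneg_of_le (fun m => mul_nonneg (h0 m) (pow_nonneg hzge m))
      (fun m => ?_) geom
    calc c m * z ^ m ≤ 1 * z ^ m :=
          mul_le_mul_of_nonneg_right (h1 m) (pow_nonneg hzge m)
      _ = z ^ m := one_mul _
  have hsumFz : ∀ N, Summable fun m => coeff m (f N) * z ^ m :=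
    fun N => sumz _ (fun m => (hnonneg m).1 N) (fun m => hFle1 m N)
  have hsumGz : ∀ N, Summable fun m => coeff m (g N) * z ^ m :=
    fun N => sumz _ (fun m => (hnonneg m).2.1 N) (fun m => hGle1 m N)
  have hsumQz : Summable fun m => coeff m fQ * z ^ m :=
    sumz _ (fun m => (hnonneg m).2.2) hQle1
  have zeroSummable : Summable fun m : ℕ => (0:ℝ) * z ^ m := by
    simpa using (summable_zero : Summable fun _ : ℕ => (0:ℝ))
  -- numeric generating functions
  set s := Real.sqrt (1 - z) with hsdef
  set Fz : ℕ → ℝ := fun N => ∑' m, coeff m (f N) * z ^ m with hFzdef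
  set Gz : ℕ → ℝ := fun N => ∑' m, coeff m (g N) * z ^ m with hGzdef
  set Qz : ℝ := ∑' m, coeff m fQ * z ^ m with hQzdef
  -- s facts
  have h1mz : (0:ℝ) < 1 - z := by linarith
  have hs0 : 0 < s := Real.sqrt_pos.mpr h1mz
  have hs2 : s ^ 2 = 1 - z := Real.sq_sqrt h1mz.le
  have hs1 : s < 1 := by
    by_contra hcon
    push_neg at hcon
    have h1 : (1:ℝ) * 1 ≤ s * s := mul_le_mul hcon hcon zero_le_one (by linarith)
    have h2 : s * s = 1 - z := by rw [← hs2]; ring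
    linarith
  have h1ps : (0:ℝ) < 1 + s := by linarith
  have h1ms : (0:ℝ) < 1 - s := by linarith
  set lam : ℝ := (1 - s) / (1 + s) with hlamdef
  set mu : ℝ := (1 + s) / (1 - s) with hmudef
  have hlm : lam * mu = 1 := by
    rw [hlamdef, hmudef]; field_simp
  have hmu1 : 1 < mu := by
    rw [hmudef, lt_div_iff₀ h1ms]; linarith
  have hlam0 : 0 < lam := div_pos h1ms h1ps
  have hlam1 : lam < 1 := by
    rw [hlamdef, div_lt_one h1ps]; linarith
  have hz' : z = 1 - s ^ 2 := by linarith
  have hsum : z * lam + z * mu = 4 - 2 * z := by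
    rw [hlamdef, hmudef, hz']; field_simp; ring
  have hlz : z * lam = (1 - s) ^ 2 := by
    rw [hlamdef, hz']; field_simp; ring
  -- numeric recurrences
  have nF : ∀ N, Fz (N + 2) = z / 4 * Fz (N + 1) + z / 4 * Fz (N + 3) + z / 2 * Fz (N + 2) := by
    intro N
    have h := tsum_shift4 (z := z) (c0 := 0) (p1 := 1 / 4) (p2 := 1 / 4) (p3 := 1 / 2)
      (p4 := 0) (b4 := fun _ => 0) (hsumFz (N + 2)) (hsumFz (N + 1)) (hsumFz (N + 3))
      (hsumFz (N + 2)) zeroSummable ((hsupp 0 (N + 2) (by omega)).1)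
      (fun m => by rw [rF m N]; ring)
    simp only [hFzdef]
    linear_combination h
  have nG : ∀ N, Gz (N + 1) = z / 4 * Gz N + z / 4 * Gz (N + 2) + z / 2 * Gz (N + 1) := by
    intro N
    have h := tsum_shift4 (z := z) (c0 := 0) (p1 := 1 / 4) (p2 := 1 / 4) (p3 := 1 / 2)
      (p4 := 0) (b4 := fun _ => 0) (hsumGz (N + 1)) (hsumGz N) (hsumGz (N + 2))
      (hsumGz (N + 1)) zeroSummable ((hsupp 0 (N + 1) (by omega)).2)
      (fun m => by rw [rG m N]; ring)
    simp only [hGzdef]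
    linear_combination h
  have E1 : Fz 1 = z / 4 * Fz 0 + z / 4 * Fz 2 + z / 2 * Fz 1 + z / 4 * Qz := by
    have h := tsum_shift4 (z := z) (c0 := 0) (p1 := 1 / 4) (p2 := 1 / 4) (p3 := 1 / 2)
      (p4 := 1 / 4) (hsumFz 1) (hsumFz 0) (hsumFz 2) (hsumFz 1) hsumQz
      ((hsupp 0 1 (by omega)).1) (fun m => rF1 m)
    simp only [hFzdef, hQzdef]
    linear_combination h
  have E0 : Fz 0 = 1 + z / 4 * Fz 1 + z / 2 * Fz 0 + z / 4 * Qz := by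
    have h := tsum_shift4 (z := z) (c0 := 1) (p1 := 1 / 4) (p2 := 1 / 2) (p3 := 1 / 4)
      (p4 := 0) (b4 := fun _ => 0) (hsumFz 0) (hsumFz 1) (hsumFz 0) hsumQz zeroSummable
      hF00 (fun m => by rw [rF0 m]; ring)
    simp only [hFzdef, hQzdef]
    linear_combination h
  have EQ : Qz = z / 4 * Gz 0 + z / 4 * Qz := by
    have h := tsum_shift4 (z := z) (c0 := 0) (p1 := 1 / 4) (p2 := 1 / 4) (p3 := 0)
      (p4 := 0) (b3 := fun _ => 0) (b4 := fun _ => 0) hsumQz (hsumGz 0) hsumQz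
      zeroSummable zeroSummable hQ0 (fun m => by rw [rQ m]; ring)
    simp only [hGzdef, hQzdef]
    linear_combination h
  have E4 : Gz 0 = z / 4 * Fz 0 + z / 4 * Gz 1 + z / 4 * Qz + z / 2 * Gz 0 := by
    have h := tsum_shift4 (z := z) (c0 := 0) (p1 := 1 / 4) (p2 := 1 / 4) (p3 := 1 / 4)
      (p4 := 1 / 2) (hsumGz 0) (hsumFz 0) (hsumGz 1) hsumQz (hsumGz 0)
      hG00 (fun m => rG0 m)
    simp only [hFzdef, hGzdef, hQzdef]
    linear_combination h
  -- bounds for the numeric functions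
  have hFznn : ∀ N, 0 ≤ Fz N := by
    intro N
    exact tsum_nonneg fun m => mul_nonneg ((hnonneg m).1 N) (pow_nonneg hzge m)
  have hGznn : ∀ N, 0 ≤ Gz N := by
    intro N
    exact tsum_nonneg fun m => mul_nonneg ((hnonneg m).2.1 N) (pow_nonneg hzge m)
  have hFzbd : ∀ N, |Fz N| ≤ (1 - z)⁻¹ := by
    intro N
    rw [abs_of_nonneg (hFznn N)]
    have h := Summable.tsum_le_tsum (f := fun m => coeff m (f N) * z ^ m) (g := fun m => z ^ m)
      (fun m => by
        calc coeff m (f N) * z ^ m ≤ 1 * z ^ m :=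
              mul_le_mul_of_nonneg_right (hFle1 m N) (pow_nonneg hzge m)
          _ = z ^ m := one_mul _) (hsumFz N) geom
    rw [tsum_geometric_of_lt_one hzge hz1] at h
    exact h
  have hGzbd : ∀ N, |Gz N| ≤ (1 - z)⁻¹ := by
    intro N
    rw [abs_of_nonneg (hGznn N)]
    have h := Summable.tsum_le_tsum (f := fun m => coeff m (g N) * z ^ m) (g := fun m => z ^ m)
      (fun m => by
        calc coeff m (g N) * z ^ m ≤ 1 * z ^ m :=
              mul_le_mul_of_nonneg_right (hGle1 m N) (pow_nonneg hzge m)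
          _ = z ^ m := one_mul _) (hsumGz N) geom
    rw [tsum_geometric_of_lt_one hzge hz1] at h
    exact h
  -- ratio lemma applications
  have hFrat : ∀ k, Fz (k + 2) = lam * Fz (k + 1) := by
    have hrec : ∀ k, (fun k => Fz (k + 1)) (k + 2)
        = (lam + mu) * (fun k => Fz (k + 1)) (k + 1) - (fun k => Fz (k + 1)) k := by
      intro k
      have h2 : z * Fz (k + 3) = z * ((lam + mu) * Fz (k + 2) - Fz (k + 1)) := by
        linear_combination (-4 : ℝ) * nF k - Fz (k + 2) * hsum
      exact mul_left_cancel₀ hzne h2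
    exact ratio_of_bounded hmu1 hlm (fun k => Fz (k + 1)) (fun k => hFzbd (k + 1)) hrec
  have hGrat : ∀ k, Gz (k + 1) = lam * Gz k := by
    have hrec : ∀ k, Gz (k + 2) = (lam + mu) * Gz (k + 1) - Gz k := by
      intro k
      have h2 : z * Gz (k + 2) = z * ((lam + mu) * Gz (k + 1) - Gz k) := by
        linear_combination (-4 : ℝ) * nG k - Gz (k + 1) * hsum
      exact mul_left_cancel₀ hzne h2
    exact ratio_of_bounded hmu1 hlm Gz hGzbd hrec
  have hFgeo : ∀ k, Fz (k + 1) = lam ^ k * Fz 1 := by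
    intro k
    induction k with
    | zero => simp
    | succ n ih =>
      have h : Fz (n + 1 + 1) = lam * Fz (n + 1) := hFrat n
      rw [h, ih, pow_succ]; ring
  have hGgeo : ∀ k, Gz k = lam ^ k * Gz 0 := by
    intro k
    induction k with
    | zero => simp
    | succ n ih => rw [hGrat n, ih, pow_succ]; ring
  -- scalar algebra
  have hx2 : Fz 2 = lam * Fz 1 := hFrat 0
  have hg1 : Gz 1 = lam * Gz 0 := hGrat 0
  have A1 : mu * Fz 1 = Fz 0 + Qz := by
    have h : z * (mu * Fz 1) = z * (Fz 0 + Qz) := by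
      linear_combination (4 : ℝ) * E1 + z * hx2 + Fz 1 * hsum
    exact mul_left_cancel₀ hzne h
  have A2 : mu * Gz 0 = Fz 0 + Qz := by
    have h : z * (mu * Gz 0) = z * (Fz 0 + Qz) := by
      linear_combination (4 : ℝ) * E4 + z * hg1 + Gz 0 * hsum
    exact mul_left_cancel₀ hzne h
  have hx1e : Fz 1 = lam * (Fz 0 + Qz) := by
    linear_combination lam * A1 - Fz 1 * hlm
  have hg0e : Gz 0 = lam * (Fz 0 + Qz) := by
    linear_combination lam * A2 - Gz 0 * hlm
  have A3 : Qz * (4 - z) = z * lam * (Fz 0 + Qz) := by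
    linear_combination (4 : ℝ) * EQ + z * hg0e
  have hi : Fz 0 - z / 2 * Fz 0 - Qz = 1 := by
    linear_combination E0 + z / 4 * hx1e - (1 / 4 : ℝ) * A3
  have hi_s : (1 + s ^ 2) * Fz 0 - 2 * Qz = 2 := by
    linear_combination (2 : ℝ) * hi + Fz 0 * hz'
  have hA3_s : (1 - s) ^ 2 * Fz 0 = (2 + 2 * s) * Qz := by
    linear_combination (-1 : ℝ) * A3 + (-Fz 0 - Qz) * hlz + (-Qz) * hz'
  have hfin0 : s * (3 + s ^ 2) * (s * (Fz 0 + Qz) - 1) = 0 := by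
    linear_combination (s * (3 + s ^ 2) / 2) * hi_s - (s * (3 + s ^ 2) / 2) * hA3_s
  have hP : s * (Fz 0 + Qz) = 1 := by
    have hD : s * (3 + s ^ 2) ≠ 0 := by positivity
    rcases mul_eq_zero.mp hfin0 with h | h
    · exact absurd h hD
    · linarith [sub_eq_zero.mp h]
  have hx1v : s * Fz 1 = lam := by
    linear_combination s * hx1e + lam * hP
  have hg0v : s * Gz 0 = lam := by
    linear_combination s * hg0e + lam * hP
  have hsne : s ≠ 0 := ne_of_gt hs0
  have hFz1v : Fz 1 = lam / s := by
    rw [eq_div_iff hsne]; linear_combination hx1v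
  have hGz0v : Gz 0 = lam / s := by
    rw [eq_div_iff hsne]; linear_combination hg0v
  -- the k-sums
  have hlamlt : ‖lam‖ < 1 := by
    rw [Real.norm_eq_abs, abs_of_nonneg hlam0.le]; exact hlam1
  have hgeoL : HasSum (fun k : ℕ => lam ^ k) (1 - lam)⁻¹ :=
    hasSum_geometric_of_lt_one hlam0.le hlam1
  have hkgeo : HasSum (fun k : ℕ => (k : ℝ) * lam ^ k) (lam / (1 - lam) ^ 2) :=
    hasSum_coe_mul_geometric_of_norm_lt_one hlamlt
  have hlamne : lam ≠ 0 := ne_of_gt hlam0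
  have hFsum2 : HasSum (fun k : ℕ => 2 * (k : ℝ) * Fz k)
      (2 * Fz 1 / lam * (lam / (1 - lam) ^ 2)) := by
    have h := hkgeo.mul_left (2 * Fz 1 / lam)
    have hfun : (fun k : ℕ => 2 * Fz 1 / lam * ((k : ℝ) * lam ^ k))
        = fun k : ℕ => 2 * (k : ℝ) * Fz k := by
      funext k
      match k with
      | 0 => simp
      | (j + 1) =>
        rw [hFgeo j, pow_succ]
        push_cast
        field_simp
    rw [hfun] at h
    exact h
  have hGsum2 : HasSum (fun k : ℕ => (2 * (k : ℝ) + 1) * Gz k)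
      (Gz 0 * (2 * (lam / (1 - lam) ^ 2) + (1 - lam)⁻¹)) := by
    have h := ((hkgeo.mul_left 2).add hgeoL).mul_left (Gz 0)
    have hfun : (fun k : ℕ => Gz 0 * (2 * ((k : ℝ) * lam ^ k) + lam ^ k))
        = fun k : ℕ => (2 * (k : ℝ) + 1) * Gz k := by
      funext k
      rw [hGgeo k]
      ring
    rw [hfun] at h
    exact h
  have htot := hFsum2.add hGsum2
  -- the double sum
  have hsliceSummable : ∀ n, Summable (fun k : ℕ => 2 * (k : ℝ) * coeff n (f k)
      + (2 * (k : ℝ) + 1) * coeff n (g k)) := by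
    intro n
    apply summable_of_ne_finset_zero (s := Finset.range (n + 1))
    intro k hk
    simp only [Finset.mem_range] at hk
    rw [(hsupp n k (by omega)).1, (hsupp n k (by omega)).2]
    ring
  have hterm_nonneg : ∀ (n k : ℕ), 0 ≤ 2 * (k : ℝ) * coeff n (f k)
      + (2 * (k : ℝ) + 1) * coeff n (g k) := by
    intro n k
    have h1 := (hnonneg n).1 k
    have h2 := (hnonneg n).2.1 k
    positivity
  have hslicebd : ∀ n, (∑' k : ℕ, (2 * (k : ℝ) * coeff n (f k)
      + (2 * (k : ℝ) + 1) * coeff n (g k))) ≤ 2 * n + 1 := by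
    intro n
    have hle : ∀ k : ℕ, 2 * (k : ℝ) * coeff n (f k) + (2 * (k : ℝ) + 1) * coeff n (g k)
        ≤ (2 * n + 1) * (coeff n (f k) + coeff n (g k)) := by
      intro k
      rcases le_or_gt k n with h | h
      · have hk : (k : ℝ) ≤ n := by exact_mod_cast h
        have h1 := (hnonneg n).1 k
        have h2 := (hnonneg n).2.1 k
        have e1 : 0 ≤ (2 * (n : ℝ) + 1 - 2 * (k : ℝ)) * coeff n (f k) :=
          mul_nonneg (by linarith) h1
        have e2 : 0 ≤ (2 * (n : ℝ) + 1 - (2 * (k : ℝ) + 1)) * coeff n (g k) :=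
          mul_nonneg (by linarith) h2
        linarith [e1, e2]
      · rw [(hsupp n k h).1, (hsupp n k h).2]
        simp
    have hsum2 : Summable fun k : ℕ => (2 * (n : ℝ) + 1) * (coeff n (f k) + coeff n (g k)) :=
      ((sumFN n).add (sumGN n)).mul_left _
    have h := Summable.tsum_le_tsum hle (hsliceSummable n) hsum2
    have hval : (∑' k : ℕ, (2 * (n : ℝ) + 1) * (coeff n (f k) + coeff n (g k)))
        = (2 * n + 1) * ((∑' k, coeff n (f k)) + ∑' k, coeff n (g k)) :=
      (((sumFN n).hasSum.add (sumGN n).hasSum).mul_left _).tsum_eq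
    rw [hval] at h
    have hq := (hnonneg n).2.2
    have h1' : (∑' k, coeff n (f k)) + (∑' k, coeff n (g k)) ≤ 1 := by
      linarith [mass n]
    have h2' : (0:ℝ) ≤ 2 * (n : ℝ) + 1 := by positivity
    have h3' := mul_le_mul_of_nonneg_left h1' h2'
    rw [mul_one] at h3'
    linarith
  have hEcoeff : ∀ n, coeff n (expectedEnd f g)
      = ∑' k : ℕ, (2 * (k : ℝ) * coeff n (f k) + (2 * (k : ℝ) + 1) * coeff n (g k)) := by
    intro n
    simp [expectedEnd, coeff_mk]
  have hEnn : ∀ n, 0 ≤ coeff n (expectedEnd f g) := by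
    intro n; rw [hEcoeff n]; exact tsum_nonneg (hterm_nonneg n)
  have hEle : ∀ n, coeff n (expectedEnd f g) ≤ 2 * n + 1 := by
    intro n; rw [hEcoeff n]; exact hslicebd n
  have hmaj : Summable fun n : ℕ => (2 * (n : ℝ) + 1) * z ^ n := by
    have h1 : Summable fun n : ℕ => (n : ℝ) ^ 1 * z ^ n :=
      summable_pow_mul_geometric_of_norm_lt_one 1
        (by rw [Real.norm_eq_abs, abs_of_nonneg hzge]; exact hz1)
    refine ((h1.mul_left 2).add geom).congr fun n => ?_
    ring
  have hEsummable : Summable (fun n : ℕ => coeff n (expectedEnd f g) * z ^ n) := by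
    refine Summable.of_nonneg_of_le
      (fun n => mul_nonneg (hEnn n) (pow_nonneg hzge n)) (fun n => ?_) hmaj
    exact mul_le_mul_of_nonneg_right (hEle n) (pow_nonneg hzge n)
  -- exchange the double sum
  have hWslice : ∀ n, Summable (fun k : ℕ => (2 * (k : ℝ) * coeff n (f k)
      + (2 * (k : ℝ) + 1) * coeff n (g k)) * z ^ n) :=
    fun n => (hsliceSummable n).mul_right _
  have hWcol : ∀ k : ℕ, Summable (fun n : ℕ => (2 * (k : ℝ) * coeff n (f k)
      + (2 * (k : ℝ) + 1) * coeff n (g k)) * z ^ n) := by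
    intro k
    refine (((hsumFz k).mul_left (2 * (k : ℝ))).add
      ((hsumGz k).mul_left (2 * (k : ℝ) + 1))).congr fun n => ?_
    ring
  have hWrow_eq : ∀ n, (∑' k : ℕ, (2 * (k : ℝ) * coeff n (f k)
      + (2 * (k : ℝ) + 1) * coeff n (g k)) * z ^ n)
      = coeff n (expectedEnd f g) * z ^ n := by
    intro n
    rw [tsum_mul_right, hEcoeff n]
  have hW : Summable (Function.uncurry fun (n k : ℕ) => (2 * (k : ℝ) * coeff n (f k)
      + (2 * (k : ℝ) + 1) * coeff n (g k)) * z ^ n) := by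
    rw [summable_prod_of_nonneg]
    · constructor
      · intro n; exact hWslice n
      · refine hEsummable.congr fun n => ?_
        exact (hWrow_eq n).symm
    · intro p
      exact mul_nonneg (hterm_nonneg p.1 p.2) (pow_nonneg hzge p.1)
  have hcolsum : ∀ k : ℕ, (∑' n : ℕ, (2 * (k : ℝ) * coeff n (f k)
      + (2 * (k : ℝ) + 1) * coeff n (g k)) * z ^ n)
      = 2 * (k : ℝ) * Fz k + (2 * (k : ℝ) + 1) * Gz k := by
    intro k
    have h := (((hsumFz k).hasSum.mul_left (2 * (k : ℝ))).add
      ((hsumGz k).hasSum.mul_left (2 * (k : ℝ) + 1)))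
    have hfun : (fun n : ℕ => 2 * (k : ℝ) * (coeff n (f k) * z ^ n)
        + (2 * (k : ℝ) + 1) * (coeff n (g k) * z ^ n))
        = fun n : ℕ => (2 * (k : ℝ) * coeff n (f k)
          + (2 * (k : ℝ) + 1) * coeff n (g k)) * z ^ n := by
      funext n; ring
    rw [hfun] at h
    rw [h.tsum_eq]
  have hswap := Summable.tsum_comm' hW hWslice hWcol
  -- hswap : ∑' k n, ... = ∑' n k, ...
  have hval : (∑' n, coeff n (expectedEnd f g) * z ^ n)
      = 2 * Fz 1 / lam * (lam / (1 - lam) ^ 2)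
        + Gz 0 * (2 * (lam / (1 - lam) ^ 2) + (1 - lam)⁻¹) := by
    have lhs_eq : (∑' n, coeff n (expectedEnd f g) * z ^ n)
        = ∑' (n : ℕ) (k : ℕ), (2 * (k : ℝ) * coeff n (f k)
          + (2 * (k : ℝ) + 1) * coeff n (g k)) * z ^ n :=
      tsum_congr fun n => (hWrow_eq n).symm
    rw [lhs_eq, ← hswap]
    have := tsum_congr (L := SummationFilter.unconditional ℕ) hcolsum
    rw [this]
    exact htot.tsum_eq
  have hfinal : 2 * Fz 1 / lam * (lam / (1 - lam) ^ 2)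
      + Gz 0 * (2 * (lam / (1 - lam) ^ 2) + (1 - lam)⁻¹)
      = (z - 1 + (1 + z) * s) / (2 * (1 - z) ^ 2) := by
    rw [hFz1v, hGz0v, hlamdef, hz']
    have hlt : (1 - s) / (1 + s) < 1 := by
      rw [div_lt_one h1ps]; linarith
    have h1 : (1:ℝ) - (1 - s) / (1 + s) ≠ 0 := (sub_pos.mpr hlt).ne'
    have h2 : (1:ℝ) - s ^ 2 ≠ 0 := by rw [← hz']; exact hzne
    have h3 : (1 - s) / (1 + s) ≠ 0 := by positivity
    field_simp
    ring_nf
    field_simp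
  have H := hEsummable.hasSum
  rw [hval, hfinal] at H
  exact H
end
end
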